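/- arXiv:1405.3532 — 2 statements merged into one kernel-verified Lean document; each statement's English description precedes it below -/
import Mathlib

section
/- If ℓ ≥ 2 and 0 ≤ r ≤ 2^{ℓ−1}, then M₀(2^ℓ + r) = M₀(2^ℓ) + M₀(r) and m₀(2^ℓ + r) = m₀(2^ℓ) + m₀(r). -/
/-- The 2-kernel of a sequence `s : ℕ → ℤ`. -/
def kernel2 (s : ℕ → ℤ) : Set (ℕ → ℤ) :=
  {t | ∃ i j : ℕ, j < 2 ^ i ∧ t = fun n => s (2 ^ i * n + j)}

/-- A sequence is 2-regular if the ℤ-module spanned by its 2-kernel is finitely generated. -/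
def IsTwoRegular (s : ℕ → ℤ) : Prop :=
  (Submodule.span ℤ (kernel2 s)).FG

/-- A sequence is 2-automatic if its 2-kernel is finite. -/
def IsTwoAutomatic (s : ℕ → ℤ) : Prop :=
  (kernel2 s).Finite

/-- The period-doubling word, fixed point (starting with 0) of 0 ↦ 01, 1 ↦ 00:
its `n`-th letter is the parity of the 2-adic valuation of `n+1`. -/
def pd (n : ℕ) : ℕ := (n + 1).factorization 2 % 2

/-- The Thue–Morse word, fixed point (starting with 0) of 0 ↦ 01, 1 ↦ 10:
its `n`-th letter is the parity of the binary digit sum of `n`. -/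
def tm (n : ℕ) : ℕ := (Nat.digits 2 n).sum % 2

/-- The 2-block coding `x = block(p, 2)` of the period-doubling word. -/
def xw (n : ℕ) : ℕ := 2 * pd n + pd (n + 1)

/-- The 2-block coding `y = block(t, 2)` of the Thue–Morse word. -/
def yw (n : ℕ) : ℕ := 2 * tm n + tm (n + 1)

/-- The factor of an infinite word `w` of length `len` occurring at position `i`. -/
def factorAt (w : ℕ → ℕ) (i len : ℕ) : List ℕ :=
  (List.range len).map fun k => w (i + k)

/-- `u` is a factor of the infinite word `w`. -/
def IsFactor (w : ℕ → ℕ) (u : List ℕ) : Prop :=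
  ∃ i, u = factorAt w i u.length

/-- Maximal number of 0's in a factor of `x` of length `n`. -/
noncomputable def M0 (n : ℕ) : ℕ := sSup {k | ∃ i, (factorAt xw i n).count 0 = k}

/-- Minimal number of 0's in a factor of `x` of length `n`. -/
noncomputable def m0 (n : ℕ) : ℕ := sInf {k | ∃ i, (factorAt xw i n).count 0 = k}

noncomputable def D0 (n : ℕ) : ℕ := M0 n - m0 n

/-- Maximal number of 2's in a factor of `x` of length `n`. -/
noncomputable def M2c (n : ℕ) : ℕ := sSup {k | ∃ i, (factorAt xw i n).count 2 = k}

/-- Minimal number of 2's in a factor of `x` of length `n`. -/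
noncomputable def m2c (n : ℕ) : ℕ := sInf {k | ∃ i, (factorAt xw i n).count 2 = k}

/-- The max-jump function for `M0`. -/
noncomputable def JM0 : ℕ → ℕ
  | 0 => 0
  | n + 1 => if M0 n < M0 (n + 1) then 1 else 0

/-- The min-jump function for `m0`. -/
noncomputable def jm0 (n : ℕ) : ℕ := if m0 n < m0 (n + 1) then 1 else 0

/-- Maximal total number of 1's and 2's in a factor of `y` of length `n`. -/
noncomputable def M12 (n : ℕ) : ℕ :=
  sSup {k | ∃ i, (factorAt yw i n).count 1 + (factorAt yw i n).count 2 = k}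

/-- Minimal total number of 1's and 2's in a factor of `y` of length `n`. -/
noncomputable def m12 (n : ℕ) : ℕ :=
  sInf {k | ∃ i, (factorAt yw i n).count 1 + (factorAt yw i n).count 2 = k}

noncomputable def D12 (n : ℕ) : ℕ := M12 n - m12 n

/-- Maximal total number of 0's and 3's in a factor of `y` of length `n`. -/
noncomputable def M03 (n : ℕ) : ℕ :=
  sSup {k | ∃ i, (factorAt yw i n).count 0 + (factorAt yw i n).count 3 = k}

/-- Minimal total number of 0's and 3's in a factor of `y` of length `n`. -/
noncomputable def m03 (n : ℕ) : ℕ :=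
  sInf {k | ∃ i, (factorAt yw i n).count 0 + (factorAt yw i n).count 3 = k}

/-- The max-jump function for `M03`. -/
noncomputable def JM03 (n : ℕ) : ℕ := if M03 (n - 1) < M03 n then 1 else 0

/-- The min-jump function for `m03`. -/
noncomputable def jm03 (n : ℕ) : ℕ := if m03 n < m03 (n + 1) then 1 else 0

/-- Abelian complexity: the number of abelian equivalence classes (i.e. distinct
multisets of letters) of factors of `w` of length `n`. -/
noncomputable def abComplexity (w : ℕ → ℕ) (n : ℕ) : ℕ :=
  Set.ncard {m : Multiset ℕ | ∃ i, (↑(factorAt w i n) : Multiset ℕ) = m}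

/-- The number of occurrences of `v` as a factor of `u`. -/
def countFactor (u v : List ℕ) : ℕ :=
  ((List.range (u.length + 1 - v.length)).filter
    fun i => decide ((u.drop i).take v.length = v)).length

/-- 2-abelian complexity: the number of 2-abelian equivalence classes of factors of `w`
of length `n`, where two words are 2-abelian equivalent when every word of length at most 2
occurs equally often in both. -/
noncomputable def abel2Complexity (w : ℕ → ℕ) (n : ℕ) : ℕ :=
  Set.ncard {f : List ℕ → ℕ |
    ∃ i, f = fun v => if v.length ≤ 2 then countFactor (factorAt w i n) v else 0}

/-- The morphism φ : 0 ↦ 12, 1 ↦ 12, 2 ↦ 00. -/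
def phiL : ℕ → List ℕ
  | 0 => [1, 2]
  | 1 => [1, 2]
  | 2 => [0, 0]
  | _ => []

/-- The morphism τ : 0 ↦ 0, 1 ↦ 2, 2 ↦ 1. -/
def tauL : ℕ → ℕ
  | 1 => 2
  | 2 => 1
  | n => n

namespace PDaux

lemma pd_lt (n : ℕ) : pd n < 2 := Nat.mod_lt _ (by norm_num)

lemma pd_two_mul (n : ℕ) : pd (2 * n) = 0 := by
  unfold pd
  rw [Nat.factorization_eq_zero_of_not_dvd (by omega)]

lemma pd_odd (n : ℕ) : pd (2 * n + 1) + pd n = 1 := by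
  unfold pd
  have h2 : (2 * n + 1 + 1) = 2 * (n + 1) := by ring
  rw [h2, Nat.factorization_mul (by norm_num) (Nat.succ_ne_zero n)]
  have : (2:ℕ).factorization 2 = 1 := Nat.Prime.factorization_self Nat.prime_two
  simp only [Finsupp.add_apply, this, Nat.succ_eq_add_one]
  omega

/-- prefix count of ones in pd -/
def Pp : ℕ → ℕ
  | 0 => 0
  | n + 1 => Pp n + pd n

lemma Pp_mono {a b : ℕ} (h : a ≤ b) : Pp a ≤ Pp b := by
  induction b with
  | zero => simp_all
  | succ b ih =>
    rcases Nat.lt_or_ge a (b+1) with h'|h'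
    · exact le_trans (ih (by omega)) (by simp [Pp])
    · have : a = b + 1 := by omega
      subst this; rfl

lemma Pp_add_le (a m : ℕ) : Pp (a + m) ≤ Pp a + m := by
  induction m with
  | zero => simp
  | succ m ih =>
    have := pd_lt (a + m)
    have : Pp (a + (m+1)) = Pp (a + m) + pd (a + m) := by
      rw [show a + (m+1) = (a+m)+1 from rfl]; rfl
    omega

lemma Pp_two_mul (n : ℕ) : Pp (2 * n) + Pp n = n := by
  induction n with
  | zero => rfl
  | succ n ih =>
    have h1 : Pp (2 * (n+1)) = Pp (2*n) + pd (2*n) + pd (2*n+1) := by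
      rw [show 2 * (n+1) = (2*n+1)+1 from by ring]
      show Pp (2*n+1) + pd (2*n+1) = _
      rfl
    have h2 := pd_two_mul n
    have h3 := pd_odd n
    have h4 : Pp (n+1) = Pp n + pd n := rfl
    omega

lemma Pp_two_mul_add_one (n : ℕ) : Pp (2 * n + 1) + Pp n = n := by
  have h1 : Pp (2*n+1) = Pp (2*n) + pd (2*n) := rfl
  have := pd_two_mul n
  have := Pp_two_mul n
  omega

/-- zeros-prefix-count of xw -/
def uu (N : ℕ) : ℕ := 2 * Pp (N / 2) + (N % 2) * pd (N / 2)

lemma uu_two_mul (a : ℕ) : uu (2 * a) = 2 * Pp a := by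
  unfold uu
  have h1 : 2 * a / 2 = a := by omega
  have h2 : 2 * a % 2 = 0 := by omega
  rw [h1, h2]; ring

lemma uu_two_mul_add_one (a : ℕ) : uu (2 * a + 1) = 2 * Pp a + pd a := by
  unfold uu
  have h1 : (2 * a + 1) / 2 = a := by omega
  have h2 : (2 * a + 1) % 2 = 1 := by omega
  rw [h1, h2]; ring

lemma uu_succ (N : ℕ) : uu (N + 1) = uu N + pd (N / 2) := by
  obtain ⟨M, rfl | rfl⟩ := Nat.even_or_odd' N
  · rw [uu_two_mul, show 2*M+1 = 2*M+1 from rfl, uu_two_mul_add_one]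
    have : 2 * M / 2 = M := by omega
    rw [this]
  · rw [uu_two_mul_add_one, show 2*M+1+1 = 2*(M+1) from by ring, uu_two_mul]
    have h1 : (2 * M + 1) / 2 = M := by omega
    have h2 : Pp (M + 1) = Pp M + pd M := rfl
    rw [h1, h2]; ring

lemma xw_pd (N : ℕ) : (if xw N = 0 then 1 else 0) = pd (N / 2) := by
  obtain ⟨M, rfl | rfl⟩ := Nat.even_or_odd' N
  · have h1 : 2 * M / 2 = M := by omega
    have h2 : xw (2*M) = 2 * pd (2*M) + pd (2*M+1) := rfl
    have h3 := pd_two_mul M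
    have h4 := pd_odd M
    have h5 := pd_lt M
    rw [h1]
    rcases (by omega : pd M = 0 ∨ pd M = 1) with h|h <;> simp [h2, h3, h] <;> omega
  · have h1 : (2 * M + 1) / 2 = M := by omega
    have h2 : xw (2*M+1) = 2 * pd (2*M+1) + pd (2*M+2) := rfl
    have h3 : pd (2*M+2) = 0 := by rw [show 2*M+2 = 2*(M+1) from by ring]; exact pd_two_mul (M+1)
    have h4 := pd_odd M
    have h5 := pd_lt M
    rw [h1]
    rcases (by omega : pd M = 0 ∨ pd M = 1) with h|h <;> simp [h2, h3, h] <;> omega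

lemma count_eq (i n : ℕ) : uu (i + n) = uu i + (factorAt xw i n).count 0 := by
  induction n with
  | zero => simp [factorAt]
  | succ n ih =>
    have h1 : factorAt xw i (n+1) = factorAt xw i n ++ [xw (i+n)] := by
      unfold factorAt
      rw [List.range_succ, List.map_append]
      rfl
    rw [show i + (n+1) = (i+n)+1 from by ring, uu_succ, h1, List.count_append, ih]
    have h2 := xw_pd (i + n)
    have h3 : ([xw (i+n)].count 0) = if xw (i+n) = 0 then 1 else 0 := by
      by_cases hx : xw (i+n) = 0
      · simp [hx]
      · simp only [List.count_cons, List.count_nil, beq_iff_eq]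
        simp [hx]
    omega

lemma uu_add_le (i n : ℕ) : uu (i + n) ≤ uu i + n := by
  induction n with
  | zero => simp
  | succ n ih =>
    have h := uu_succ (i + n)
    have h2 : pd ((i+n)/2) < 2 := pd_lt _
    have h3 : pd ((i+n)/2) ≤ 1 := by omega
    rw [show i + (n+1) = (i+n)+1 from by ring, h]
    omega

def Rel (m q e d : ℕ) : Prop := ∃ a, pd a = e ∧ pd (a + m) = d ∧ Pp (a + m) = Pp a + q

lemma Rel_lt {m q e d : ℕ} (h : Rel m q e d) : e < 2 ∧ d < 2 := by
  obtain ⟨a, h1, h2, _⟩ := h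
  exact ⟨h1 ▸ pd_lt a, h2 ▸ pd_lt (a+m)⟩

lemma Rel_le {m q e d : ℕ} (h : Rel m q e d) : q ≤ m := by
  obtain ⟨a, _, _, h3⟩ := h
  have := Pp_add_le a m
  omega

lemma Rel_ge {m q e d : ℕ} (hm : 1 ≤ m) (h : Rel m q e d) : e ≤ q := by
  obtain ⟨a, h1, h2, h3⟩ := h
  have h4 : Pp (a+1) ≤ Pp (a+m) := Pp_mono (by omega)
  have h5 : Pp (a+1) = Pp a + pd a := rfl
  omega

lemma pd_double (α s : ℕ) (hs : s < 2) : pd (2 * α + s) = s * (1 - pd α) := by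
  rcases (by omega : s = 0 ∨ s = 1) with rfl|rfl
  · simpa using pd_two_mul α
  · have := pd_odd α
    have := pd_lt α
    omega

lemma Pp_double (α s : ℕ) (hs : s < 2) : Pp (2 * α + s) + Pp α = α := by
  rcases (by omega : s = 0 ∨ s = 1) with rfl|rfl
  · simpa using Pp_two_mul α
  · exact Pp_two_mul_add_one α

lemma Rel_exists_q (a b : ℕ) (h : a ≤ b) : ∃ q, Pp b = Pp a + q :=
  ⟨Pp b - Pp a, by have := Pp_mono h; omega⟩

lemma Deven (h k e d : ℕ) :
    Rel (2 * h) k e d ↔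
    ∃ s e' d' q', s < 2 ∧ Rel h q' e' d' ∧ k + q' = h ∧ e = s * (1 - e') ∧ d = s * (1 - d') := by
  constructor
  · rintro ⟨a, ha1, ha2, ha3⟩
    set s := a % 2 with hs
    set α := a / 2 with hα
    have hsa : a = 2 * α + s := by omega
    have hslt : s < 2 := by omega
    have hb : a + 2 * h = 2 * (α + h) + s := by omega
    obtain ⟨q', hq'⟩ := Rel_exists_q α (α + h) (by omega)
    refine ⟨s, pd α, pd (α + h), q', hslt, ⟨α, rfl, rfl, hq'⟩, ?_, ?_, ?_⟩
    · have e1 := Pp_double α s hslt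
      have e2 := Pp_double (α + h) s hslt
      rw [hsa, show 2*α+s+2*h = 2*(α+h)+s from by ring] at ha3
      omega
    · rw [hsa] at ha1
      rw [pd_double α s hslt] at ha1
      omega
    · rw [hb] at ha2
      rw [pd_double (α+h) s hslt] at ha2
      omega
  · rintro ⟨s, e', d', q', hslt, ⟨α, hα1, hα2, hα3⟩, hk, he, hd⟩
    refine ⟨2 * α + s, ?_, ?_, ?_⟩
    · rw [pd_double α s hslt, hα1, he]
    · rw [show 2*α+s+2*h = 2*(α+h)+s from by ring, pd_double (α+h) s hslt, hα2, hd]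
    · have e1 := Pp_double α s hslt
      have e2 := Pp_double (α + h) s hslt
      rw [show 2*α+s+2*h = 2*(α+h)+s from by ring]
      omega

lemma Dodd (h k e d : ℕ) :
    Rel (2 * h + 1) k e d ↔
    (∃ e' d' q', Rel h q' e' d' ∧ k + q' = h ∧ e = 0 ∧ d = 1 - d') ∨
    (∃ e' d' q', Rel (h + 1) q' e' d' ∧ k + q' = h + 1 ∧ e = 1 - e' ∧ d = 0) := by
  constructor
  · rintro ⟨a, ha1, ha2, ha3⟩
    set s := a % 2 with hs
    set α := a / 2 with hα
    have hsa : a = 2 * α + s := by omega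
    have hslt : s < 2 := by omega
    rcases (by omega : s = 0 ∨ s = 1) with h0|h1
    · left
      have hb : a + (2 * h + 1) = 2 * (α + h) + 1 := by omega
      obtain ⟨q', hq'⟩ := Rel_exists_q α (α + h) (by omega)
      refine ⟨pd α, pd (α + h), q', ⟨α, rfl, rfl, hq'⟩, ?_, ?_, ?_⟩
      · have e1 := Pp_two_mul α
        have e2 := Pp_two_mul_add_one (α + h)
        rw [hsa, h0, show 2*α+0+(2*h+1) = 2*(α+h)+1 from by ring,
          show (2*α+0 : ℕ) = 2*α from by ring] at ha3
        omega
      · rw [hsa, h0] at ha1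
        simp at ha1
        rw [← ha1, pd_two_mul α]
      · rw [hb] at ha2
        have := pd_odd (α + h)
        have := pd_lt (α + h)
        omega
    · right
      have hb : a + (2 * h + 1) = 2 * (α + h + 1) := by omega
      obtain ⟨q', hq'⟩ := Rel_exists_q α (α + h + 1) (by omega)
      refine ⟨pd α, pd (α + h + 1), q', ⟨α, rfl, rfl, hq'⟩, ?_, ?_, ?_⟩
      · have e1 := Pp_two_mul_add_one α
        have e2 := Pp_two_mul (α + h + 1)
        rw [hsa, h1, show 2*α+1+(2*h+1) = 2*(α+h+1) from by ring] at ha3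
        omega
      · rw [hsa, h1] at ha1
        have := pd_odd α
        have := pd_lt α
        omega
      · rw [hb] at ha2
        rw [← ha2, pd_two_mul]
  · rintro (⟨e', d', q', ⟨α, hα1, hα2, hα3⟩, hk, he, hd⟩ | ⟨e', d', q', ⟨α, hα1, hα2, hα3⟩, hk, he, hd⟩)
    · refine ⟨2 * α, ?_, ?_, ?_⟩
      · rw [pd_two_mul, he]
      · rw [show 2*α+(2*h+1) = 2*(α+h)+1 from by ring]
        have := pd_odd (α + h)
        have := pd_lt (α + h)
        omega
      · rw [show 2*α+(2*h+1) = 2*(α+h)+1 from by ring]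
        have e1 := Pp_two_mul α
        have e2 := Pp_two_mul_add_one (α + h)
        omega
    · refine ⟨2 * α + 1, ?_, ?_, ?_⟩
      · have := pd_odd α
        have := pd_lt α
        omega
      · rw [show 2*α+1+(2*h+1) = 2*(α+h+1) from by ring, pd_two_mul]
        omega
      · rw [show 2*α+1+(2*h+1) = 2*(α+h+1) from by ring]
        have e1 := Pp_two_mul_add_one α
        have e2 := Pp_two_mul (α + h + 1)
        have hq2 : Pp (α + (h+1)) = Pp (α+h+1) := by ring_nf
        rw [hq2] at hα3
        omega

abbrev Iv := Option (ℕ × ℕ)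

def hul : Iv → Iv → Iv
  | none, J => J
  | some p, none => some p
  | some p, some q => some (min p.1 q.1, max p.2 q.2)

def rf (h : ℕ) : Iv → Iv
  | none => none
  | some p => some (h - p.2, h - p.1)

def shv (c : ℕ) : Iv → Iv
  | none => none
  | some p => some (c + p.1, c + 1 + p.2)

def InIv (q : ℕ) : Iv → Prop
  | none => False
  | some p => p.1 ≤ q ∧ q ≤ p.2

lemma hul_none {I J : Iv} (h : hul I J = none) : I = none ∧ J = none := by
  cases I <;> cases J <;> simp_all [hul]

lemma InIv_hul_left {q : ℕ} {I J : Iv} (h : InIv q I) : InIv q (hul I J) := by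
  cases I <;> cases J <;> simp_all [hul, InIv] <;> omega

lemma InIv_hul_right {q : ℕ} {I J : Iv} (h : InIv q J) : InIv q (hul I J) := by
  cases I <;> cases J <;> simp_all [hul, InIv] <;> omega

lemma InIv_some {q lo hi : ℕ} {I : Iv} (h : I = some (lo, hi)) (h1 : lo ≤ q) (h2 : q ≤ hi) :
    InIv q I := by subst h; exact ⟨h1, h2⟩

/-- endpoints of a hull come from one of the arguments -/
lemma hul_ends {I J : Iv} {lo hi : ℕ} (h : hul I J = some (lo, hi)) :
    ((∃ b, I = some (lo, b)) ∨ (∃ b, J = some (lo, b))) ∧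
    ((∃ a, I = some (a, hi)) ∨ (∃ a, J = some (a, hi))) := by
  match I, J with
  | none, none => simp [hul] at h
  | none, some p => simp [hul] at h; subst h; exact ⟨Or.inr ⟨hi, rfl⟩, Or.inr ⟨lo, rfl⟩⟩
  | some p, none => simp [hul] at h; subst h; exact ⟨Or.inl ⟨hi, rfl⟩, Or.inl ⟨lo, rfl⟩⟩
  | some p, some r =>
    simp [hul] at h
    constructor
    · rcases le_total p.1 r.1 with hc|hc
      · exact Or.inl ⟨p.2, by rw [← h.1]; simp [min_eq_left hc]⟩
      · exact Or.inr ⟨r.2, by rw [← h.1]; simp [min_eq_right hc]⟩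
    · rcases le_total p.2 r.2 with hc|hc
      · exact Or.inr ⟨r.1, by rw [← h.2]; simp [max_eq_right hc]⟩
      · exact Or.inl ⟨p.1, by rw [← h.2]; simp [max_eq_left hc]⟩

lemma rf_some {h lo hi : ℕ} {I : Iv} (he : rf h I = some (lo, hi)) :
    ∃ a b, I = some (a, b) ∧ lo = h - b ∧ hi = h - a := by
  cases I with
  | none => simp [rf] at he
  | some p => simp [rf] at he; exact ⟨p.1, p.2, rfl, he.1.symm, he.2.symm⟩

lemma shv_hul (c : ℕ) (I J : Iv) : hul (shv c I) (shv c J) = shv c (hul I J) := by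
  cases I <;> cases J <;> simp [hul, shv] <;> omega

lemma rf_shv (σ c c' : ℕ) (I : Iv) (hb : ∀ a b, I = some (a, b) → a ≤ b ∧ b ≤ σ) :
    rf (c + c' + 1 + σ) (shv c I) = shv c' (rf σ I) := by
  cases I with
  | none => simp [rf, shv]
  | some p =>
    obtain ⟨h1, h2⟩ := hb p.1 p.2 rfl
    simp [rf, shv]
    omega

def Bd : ℕ → ℕ → ℕ → Iv
  | 0, e, d => if e = d then some (0, 0) else none
  | 1, e, d => if e = 1 then (if d = 0 then some (1, 1) else none) else some (0, 0)
  | (m + 2), e, d =>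
    let h := (m + 2) / 2
    if hp : (m + 2) % 2 = 0 then
      if e = 0 ∧ d = 0 then
        hul (hul (rf h (Bd h 0 0)) (rf h (Bd h 0 1))) (hul (rf h (Bd h 1 0)) (rf h (Bd h 1 1)))
      else rf h (Bd h (1 - e) (1 - d))
    else
      if e = 0 ∧ d = 0 then
        hul (hul (rf h (Bd h 0 1)) (rf h (Bd h 1 1)))
            (hul (rf (h + 1) (Bd (h + 1) 1 0)) (rf (h + 1) (Bd (h + 1) 1 1)))
      else if e = 0 ∧ d = 1 then hul (rf h (Bd h 0 0)) (rf h (Bd h 1 0))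
      else if e = 1 ∧ d = 0 then hul (rf (h + 1) (Bd (h + 1) 0 0)) (rf (h + 1) (Bd (h + 1) 0 1))
      else none
termination_by m => m
decreasing_by all_goals omega

lemma Bd_even (h : ℕ) (hh : 1 ≤ h) (e d : ℕ) :
    Bd (2 * h) e d =
      if e = 0 ∧ d = 0 then
        hul (hul (rf h (Bd h 0 0)) (rf h (Bd h 0 1))) (hul (rf h (Bd h 1 0)) (rf h (Bd h 1 1)))
      else rf h (Bd h (1 - e) (1 - d)) := by
  obtain ⟨m, rfl⟩ : ∃ m, h = m + 1 := ⟨h - 1, by omega⟩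
  rw [show 2 * (m + 1) = (2 * m) + 2 from by ring]
  rw [Bd]
  have h2 : (2 * m + 2) % 2 = 0 := by omega
  have h1 : (2 * m + 2) / 2 = m + 1 := by omega
  simp only [h1, h2, dif_pos]

lemma Bd_odd (h : ℕ) (hh : 1 ≤ h) (e d : ℕ) :
    Bd (2 * h + 1) e d =
      if e = 0 ∧ d = 0 then
        hul (hul (rf h (Bd h 0 1)) (rf h (Bd h 1 1)))
            (hul (rf (h + 1) (Bd (h + 1) 1 0)) (rf (h + 1) (Bd (h + 1) 1 1)))
      else if e = 0 ∧ d = 1 then hul (rf h (Bd h 0 0)) (rf h (Bd h 1 0))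
      else if e = 1 ∧ d = 0 then hul (rf (h + 1) (Bd (h + 1) 0 0)) (rf (h + 1) (Bd (h + 1) 0 1))
      else none := by
  obtain ⟨m, rfl⟩ : ∃ m, h = m + 1 := ⟨h - 1, by omega⟩
  rw [show 2 * (m + 1) + 1 = (2 * m + 1) + 2 from by ring]
  rw [Bd]
  have h2 : ¬((2 * m + 1 + 2) % 2 = 0) := by omega
  have h1 : (2 * m + 1 + 2) / 2 = m + 1 := by omega
  simp only [h1, h2, dif_neg, not_false_iff]

lemma Bd0_00 : Bd 0 0 0 = some (0, 0) := by rw [Bd]; norm_num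
lemma Bd0_01 : Bd 0 0 1 = none := by rw [Bd]; norm_num
lemma Bd0_10 : Bd 0 1 0 = none := by rw [Bd]; norm_num
lemma Bd0_11 : Bd 0 1 1 = some (0, 0) := by rw [Bd]; norm_num
lemma Bd1_00 : Bd 1 0 0 = some (0, 0) := by rw [Bd]; norm_num
lemma Bd1_01 : Bd 1 0 1 = some (0, 0) := by rw [Bd]; norm_num
lemma Bd1_10 : Bd 1 1 0 = some (1, 1) := by rw [Bd]; norm_num
lemma Bd1_11 : Bd 1 1 1 = none := by rw [Bd]; norm_num
lemma Bd2_00 : Bd 2 0 0 = some (0, 1) := by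
  rw [show (2:ℕ) = 2 * 1 from rfl, Bd_even 1 (by norm_num)]
  norm_num [Bd1_00, Bd1_01, Bd1_10, Bd1_11, hul, rf]
lemma Bd2_01 : Bd 2 0 1 = some (0, 0) := by
  rw [show (2:ℕ) = 2 * 1 from rfl, Bd_even 1 (by norm_num)]
  norm_num [Bd1_00, Bd1_01, Bd1_10, Bd1_11, hul, rf]
lemma Bd2_10 : Bd 2 1 0 = some (1, 1) := by
  rw [show (2:ℕ) = 2 * 1 from rfl, Bd_even 1 (by norm_num)]
  norm_num [Bd1_00, Bd1_01, Bd1_10, Bd1_11, hul, rf]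
lemma Bd2_11 : Bd 2 1 1 = some (1, 1) := by
  rw [show (2:ℕ) = 2 * 1 from rfl, Bd_even 1 (by norm_num)]
  norm_num [Bd1_00, Bd1_01, Bd1_10, Bd1_11, hul, rf]
lemma Bd3_00 : Bd 3 0 0 = some (1, 1) := by
  rw [show (3:ℕ) = 2 * 1 + 1 from rfl, Bd_odd 1 (by norm_num)]
  norm_num [Bd1_00, Bd1_01, Bd1_10, Bd1_11, Bd2_00, Bd2_01, Bd2_10, Bd2_11, hul, rf]
lemma Bd3_01 : Bd 3 0 1 = some (0, 1) := by
  rw [show (3:ℕ) = 2 * 1 + 1 from rfl, Bd_odd 1 (by norm_num)]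
  norm_num [Bd1_00, Bd1_01, Bd1_10, Bd1_11, Bd2_00, Bd2_01, Bd2_10, Bd2_11, hul, rf]
lemma Bd3_10 : Bd 3 1 0 = some (1, 2) := by
  rw [show (3:ℕ) = 2 * 1 + 1 from rfl, Bd_odd 1 (by norm_num)]
  norm_num [Bd1_00, Bd1_01, Bd1_10, Bd1_11, Bd2_00, Bd2_01, Bd2_10, Bd2_11, hul, rf]
lemma Bd3_11 : Bd 3 1 1 = none := by
  rw [show (3:ℕ) = 2 * 1 + 1 from rfl, Bd_odd 1 (by norm_num)]
  norm_num [Bd1_00, Bd1_01, Bd1_10, Bd1_11, Bd2_00, Bd2_01, Bd2_10, Bd2_11, hul, rf]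
lemma Bd4_00 : Bd 4 0 0 = some (1, 2) := by
  rw [show (4:ℕ) = 2 * 2 from rfl, Bd_even 2 (by norm_num)]
  norm_num [Bd2_00, Bd2_01, Bd2_10, Bd2_11, hul, rf]
lemma Bd4_01 : Bd 4 0 1 = some (1, 1) := by
  rw [show (4:ℕ) = 2 * 2 from rfl, Bd_even 2 (by norm_num)]
  norm_num [Bd2_00, Bd2_01, Bd2_10, Bd2_11, hul, rf]
lemma Bd4_10 : Bd 4 1 0 = some (2, 2) := by
  rw [show (4:ℕ) = 2 * 2 from rfl, Bd_even 2 (by norm_num)]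
  norm_num [Bd2_00, Bd2_01, Bd2_10, Bd2_11, hul, rf]
lemma Bd4_11 : Bd 4 1 1 = some (1, 2) := by
  rw [show (4:ℕ) = 2 * 2 from rfl, Bd_even 2 (by norm_num)]
  norm_num [Bd2_00, Bd2_01, Bd2_10, Bd2_11, hul, rf]
lemma Bd5_00 : Bd 5 0 0 = some (1, 2) := by
  rw [show (5:ℕ) = 2 * 2 + 1 from rfl, Bd_odd 2 (by norm_num)]
  norm_num [Bd2_00, Bd2_01, Bd2_10, Bd2_11, Bd3_00, Bd3_01, Bd3_10, Bd3_11, hul, rf]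
lemma Bd5_01 : Bd 5 0 1 = some (1, 2) := by
  rw [show (5:ℕ) = 2 * 2 + 1 from rfl, Bd_odd 2 (by norm_num)]
  norm_num [Bd2_00, Bd2_01, Bd2_10, Bd2_11, Bd3_00, Bd3_01, Bd3_10, Bd3_11, hul, rf]
lemma Bd5_10 : Bd 5 1 0 = some (2, 3) := by
  rw [show (5:ℕ) = 2 * 2 + 1 from rfl, Bd_odd 2 (by norm_num)]
  norm_num [Bd2_00, Bd2_01, Bd2_10, Bd2_11, Bd3_00, Bd3_01, Bd3_10, Bd3_11, hul, rf]
lemma Bd5_11 : Bd 5 1 1 = none := by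
  rw [show (5:ℕ) = 2 * 2 + 1 from rfl, Bd_odd 2 (by norm_num)]
  norm_num [Bd2_00, Bd2_01, Bd2_10, Bd2_11, Bd3_00, Bd3_01, Bd3_10, Bd3_11, hul, rf]
lemma Bd6_00 : Bd 6 0 0 = some (1, 3) := by
  rw [show (6:ℕ) = 2 * 3 from rfl, Bd_even 3 (by norm_num)]
  norm_num [Bd3_00, Bd3_01, Bd3_10, Bd3_11, hul, rf]
lemma Bd6_01 : Bd 6 0 1 = some (1, 2) := by
  rw [show (6:ℕ) = 2 * 3 from rfl, Bd_even 3 (by norm_num)]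
  norm_num [Bd3_00, Bd3_01, Bd3_10, Bd3_11, hul, rf]
lemma Bd6_10 : Bd 6 1 0 = some (2, 3) := by
  rw [show (6:ℕ) = 2 * 3 from rfl, Bd_even 3 (by norm_num)]
  norm_num [Bd3_00, Bd3_01, Bd3_10, Bd3_11, hul, rf]
lemma Bd6_11 : Bd 6 1 1 = some (2, 2) := by
  rw [show (6:ℕ) = 2 * 3 from rfl, Bd_even 3 (by norm_num)]
  norm_num [Bd3_00, Bd3_01, Bd3_10, Bd3_11, hul, rf]

lemma pd0 : pd 0 = 0 := by have h := pd_two_mul 0; norm_num at h; exact h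
lemma pd1 : pd 1 = 1 := by have h := pd_odd 0; norm_num at h; have := pd0; omega
lemma pd2 : pd 2 = 0 := by have h := pd_two_mul 1; norm_num at h; exact h
lemma pd3 : pd 3 = 0 := by have h := pd_odd 1; norm_num at h; have := pd1; omega

lemma InIv_rf {h q q' : ℕ} {I : Iv} (hIn : InIv q' I) (hq : q + q' = h) : InIv q (rf h I) := by
  cases I with
  | none => exact hIn.elim
  | some p => obtain ⟨h1, h2⟩ := hIn; exact ⟨by omega, by omega⟩

lemma hul4_ends {I1 I2 I3 I4 : Iv} {lo hi : ℕ}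
    (h : hul (hul I1 I2) (hul I3 I4) = some (lo, hi)) :
    ((∃ b, I1 = some (lo, b)) ∨ (∃ b, I2 = some (lo, b)) ∨
     (∃ b, I3 = some (lo, b)) ∨ (∃ b, I4 = some (lo, b))) ∧
    ((∃ a, I1 = some (a, hi)) ∨ (∃ a, I2 = some (a, hi)) ∨
     (∃ a, I3 = some (a, hi)) ∨ (∃ a, I4 = some (a, hi))) := by
  obtain ⟨hlo, hhi⟩ := hul_ends h
  constructor
  · rcases hlo with ⟨b, hb⟩|⟨b, hb⟩
    · rcases (hul_ends hb).1 with h'|h'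
      · exact Or.inl h'
      · exact Or.inr (Or.inl h')
    · rcases (hul_ends hb).1 with h'|h'
      · exact Or.inr (Or.inr (Or.inl h'))
      · exact Or.inr (Or.inr (Or.inr h'))
  · rcases hhi with ⟨a, ha⟩|⟨a, ha⟩
    · rcases (hul_ends ha).2 with h'|h'
      · exact Or.inl h'
      · exact Or.inr (Or.inl h')
    · rcases (hul_ends ha).2 with h'|h'
      · exact Or.inr (Or.inr (Or.inl h'))
      · exact Or.inr (Or.inr (Or.inr h'))

def ChStmt (m : ℕ) : Prop := ∀ e d, e < 2 → d < 2 →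
    (∀ q, Rel m q e d → InIv q (Bd m e d)) ∧
    (∀ lo hi, Bd m e d = some (lo, hi) → Rel m lo e d ∧ Rel m hi e d)

lemma end_lo {h e' d' lo b : ℕ} (he' : e' < 2) (hd' : d' < 2) (ch : ChStmt h)
    (hI : rf h (Bd h e' d') = some (lo, b)) : ∃ b', Rel h b' e' d' ∧ lo + b' = h := by
  obtain ⟨a', b', hBd, h1, h2⟩ := rf_some hI
  have hR := ((ch e' d' he' hd').2 a' b' hBd).2
  exact ⟨b', hR, by have := Rel_le hR; omega⟩

lemma end_hi {h e' d' a hi : ℕ} (he' : e' < 2) (hd' : d' < 2) (ch : ChStmt h)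
    (hI : rf h (Bd h e' d') = some (a, hi)) : ∃ a', Rel h a' e' d' ∧ hi + a' = h := by
  obtain ⟨a', b', hBd, h1, h2⟩ := rf_some hI
  have hR := ((ch e' d' he' hd').2 a' b' hBd).1
  exact ⟨a', hR, by have := Rel_le hR; omega⟩

theorem Bd_char : ∀ m, ChStmt m := by
  intro m
  induction m using Nat.strong_induction_on with
  | _ m IH =>
  rcases Nat.lt_or_ge m 2 with hm|hm
  · -- base cases m = 0, 1
    interval_cases m
    · -- m = 0
      intro e d he hd
      constructor
      · rintro q ⟨a, ha1, ha2, ha3⟩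
        simp only [Nat.add_zero] at ha2 ha3
        have hq : q = 0 := by omega
        have hed : e = d := by rw [← ha1, ← ha2]
        rw [Bd, if_pos hed, hq]
        exact ⟨le_rfl, le_rfl⟩
      · intro lo hi hB
        rw [Bd] at hB
        by_cases hed : e = d
        · rw [if_pos hed] at hB
          simp at hB
          obtain ⟨rfl, rfl⟩ := hB
          have : ∃ a, pd a = e := by
            rcases (by omega : e = 0 ∨ e = 1) with rfl|rfl
            · exact ⟨0, pd0⟩
            · exact ⟨1, pd1⟩
          obtain ⟨a, ha⟩ := this
          exact ⟨⟨a, ha, by simpa [← hed] using ha, by simp⟩, ⟨a, ha, by simpa [← hed] using ha, by simp⟩⟩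
        · rw [if_neg hed] at hB
          exact absurd hB (by simp)
    · -- m = 1
      intro e d he hd
      have hPp : ∀ a, Pp (a + 1) = Pp a + pd a := fun a => rfl
      constructor
      · rintro q ⟨a, ha1, ha2, ha3⟩
        have hq : q = e := by have := hPp a; omega
        have hne : ¬(e = 1 ∧ d = 1) := by
          rintro ⟨rfl, hd1⟩
          obtain ⟨α, hα | hα⟩ := Nat.even_or_odd' a
          · rw [hα, pd_two_mul α] at ha1; omega
          · rw [hα, show 2*α+1+1 = 2*(α+1) from by ring, pd_two_mul (α+1)] at ha2; omega
        rw [Bd]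
        rcases (by omega : e = 0 ∨ e = 1) with rfl|rfl
        · simp only [if_neg (by norm_num : ¬(0:ℕ) = 1)]
          exact ⟨by omega, by omega⟩
        · have hd0 : d = 0 := by omega
          simp only [if_pos rfl, hd0, if_pos rfl]
          exact ⟨by omega, by omega⟩
      · intro lo hi hB
        rw [Bd] at hB
        rcases (by omega : e = 0 ∨ e = 1) with rfl|rfl
        · simp only [if_neg (by norm_num : ¬(0:ℕ) = 1)] at hB
          simp at hB
          obtain ⟨rfl, rfl⟩ := hB
          rcases (by omega : d = 0 ∨ d = 1) with rfl|rfl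
          · exact ⟨⟨2, pd2, by norm_num [pd3], by rw [hPp 2, pd2]⟩,
              ⟨2, pd2, by norm_num [pd3], by rw [hPp 2, pd2]⟩⟩
          · exact ⟨⟨0, pd0, by norm_num [pd1], by rw [hPp 0, pd0]⟩,
              ⟨0, pd0, by norm_num [pd1], by rw [hPp 0, pd0]⟩⟩
        · simp only [if_pos rfl] at hB
          rcases (by omega : d = 0 ∨ d = 1) with rfl|rfl
          · simp only [if_pos rfl] at hB
            simp at hB
            obtain ⟨rfl, rfl⟩ := hB
            exact ⟨⟨1, pd1, by norm_num [pd2], by rw [hPp 1, pd1]⟩,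
              ⟨1, pd1, by norm_num [pd2], by rw [hPp 1, pd1]⟩⟩
          · simp only [if_neg (by norm_num : ¬(1:ℕ) = 0)] at hB
            exact absurd hB (by simp)
  · -- m ≥ 2
    obtain ⟨m', rfl⟩ : ∃ m', m = m' + 2 := ⟨m - 2, by omega⟩
    obtain ⟨h, hh | hh⟩ := Nat.even_or_odd' (m' + 2)
    · -- even: m'+2 = 2h
      rw [hh]
      have hh1 : 1 ≤ h := by omega
      have IHh : ChStmt h := IH h (by omega)
      intro e d he hd
      rw [Bd_even h hh1]
      constructor
      · intro q hq
        rw [Deven] at hq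
        obtain ⟨s, e', d', q', hs, hrel, hsum, heq, hdq⟩ := hq
        have he' := (Rel_lt hrel).1
        have hd' := (Rel_lt hrel).2
        have hIn : InIv q (rf h (Bd h e' d')) :=
          InIv_rf ((IHh e' d' he' hd').1 q' hrel) hsum
        rcases (by omega : s = 0 ∨ s = 1) with rfl|rfl
        · have he0 : e = 0 := by omega
          have hd0 : d = 0 := by omega
          rw [if_pos ⟨he0, hd0⟩]
          rcases (by omega : e' = 0 ∨ e' = 1) with rfl|rfl <;>
            rcases (by omega : d' = 0 ∨ d' = 1) with rfl|rfl
          · exact InIv_hul_left (InIv_hul_left hIn)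
          · exact InIv_hul_left (InIv_hul_right hIn)
          · exact InIv_hul_right (InIv_hul_left hIn)
          · exact InIv_hul_right (InIv_hul_right hIn)
        · by_cases h00 : e = 0 ∧ d = 0
          · have he1 : e' = 1 := by omega
            have hd1 : d' = 1 := by omega
            rw [if_pos h00]
            rw [he1, hd1] at hIn
            exact InIv_hul_right (InIv_hul_right hIn)
          · rw [if_neg h00]
            have h1e : 1 - e = e' := by omega
            have h1d : 1 - d = d' := by omega
            rw [h1e, h1d]
            exact hIn
      · intro lo hi hB
        by_cases h00 : e = 0 ∧ d = 0
        · rw [if_pos h00] at hB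
          obtain ⟨rfl⟩ : e = 0 := h00.1
          obtain ⟨rfl⟩ : d = 0 := h00.2
          obtain ⟨hlo, hhi⟩ := hul4_ends hB
          constructor
          · have : ∃ e' d', e' < 2 ∧ d' < 2 ∧ ∃ b', Rel h b' e' d' ∧ lo + b' = h := by
              rcases hlo with ⟨b, hI⟩|⟨b, hI⟩|⟨b, hI⟩|⟨b, hI⟩
              · exact ⟨0, 0, by norm_num, by norm_num, end_lo (by norm_num) (by norm_num) IHh hI⟩
              · exact ⟨0, 1, by norm_num, by norm_num, end_lo (by norm_num) (by norm_num) IHh hI⟩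
              · exact ⟨1, 0, by norm_num, by norm_num, end_lo (by norm_num) (by norm_num) IHh hI⟩
              · exact ⟨1, 1, by norm_num, by norm_num, end_lo (by norm_num) (by norm_num) IHh hI⟩
            obtain ⟨e', d', _, _, b', hR, hsum⟩ := this
            rw [Deven]
            exact ⟨0, e', d', b', by norm_num, hR, hsum, by norm_num, by norm_num⟩
          · have : ∃ e' d', e' < 2 ∧ d' < 2 ∧ ∃ a', Rel h a' e' d' ∧ hi + a' = h := by
              rcases hhi with ⟨a, hI⟩|⟨a, hI⟩|⟨a, hI⟩|⟨a, hI⟩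
              · exact ⟨0, 0, by norm_num, by norm_num, end_hi (by norm_num) (by norm_num) IHh hI⟩
              · exact ⟨0, 1, by norm_num, by norm_num, end_hi (by norm_num) (by norm_num) IHh hI⟩
              · exact ⟨1, 0, by norm_num, by norm_num, end_hi (by norm_num) (by norm_num) IHh hI⟩
              · exact ⟨1, 1, by norm_num, by norm_num, end_hi (by norm_num) (by norm_num) IHh hI⟩
            obtain ⟨e', d', _, _, a', hR, hsum⟩ := this
            rw [Deven]
            exact ⟨0, e', d', a', by norm_num, hR, hsum, by norm_num, by norm_num⟩
        · rw [if_neg h00] at hB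
          have h1e : 1 - e < 2 := by omega
          have h1d : 1 - d < 2 := by omega
          obtain ⟨b', hRb, hsb⟩ := end_lo h1e h1d IHh hB
          obtain ⟨a', hRa, hsa⟩ := end_hi h1e h1d IHh hB
          constructor
          · rw [Deven]
            exact ⟨1, 1 - e, 1 - d, b', by norm_num, hRb, hsb, by omega, by omega⟩
          · rw [Deven]
            exact ⟨1, 1 - e, 1 - d, a', by norm_num, hRa, hsa, by omega, by omega⟩
    · -- odd: m'+2 = 2h+1
      rw [hh]
      have hh1 : 1 ≤ h := by omega
      have IHh : ChStmt h := IH h (by omega)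
      have IHh1 : ChStmt (h + 1) := IH (h + 1) (by omega)
      intro e d he hd
      rw [Bd_odd h hh1]
      constructor
      · intro q hq
        rw [Dodd] at hq
        rcases hq with ⟨e', d', q', hrel, hsum, he0, hd1⟩ | ⟨e', d', q', hrel, hsum, he1, hd0⟩
        · have he' := (Rel_lt hrel).1
          have hd' := (Rel_lt hrel).2
          have hIn : InIv q (rf h (Bd h e' d')) :=
            InIv_rf ((IHh e' d' he' hd').1 q' hrel) hsum
          rcases (by omega : d' = 0 ∨ d' = 1) with rfl|rfl
          · -- d = 1
            have hd1' : d = 1 := by omega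
            rw [if_neg (by omega), if_pos ⟨he0, hd1'⟩]
            rcases (by omega : e' = 0 ∨ e' = 1) with rfl|rfl
            · exact InIv_hul_left hIn
            · exact InIv_hul_right hIn
          · -- d = 0
            have hd0' : d = 0 := by omega
            rw [if_pos ⟨he0, hd0'⟩]
            rcases (by omega : e' = 0 ∨ e' = 1) with rfl|rfl
            · exact InIv_hul_left (InIv_hul_left hIn)
            · exact InIv_hul_left (InIv_hul_right hIn)
        · have he' := (Rel_lt hrel).1
          have hd' := (Rel_lt hrel).2
          have hIn : InIv q (rf (h + 1) (Bd (h + 1) e' d')) :=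
            InIv_rf ((IHh1 e' d' he' hd').1 q' hrel) hsum
          rcases (by omega : e' = 0 ∨ e' = 1) with rfl|rfl
          · -- e = 1
            have he1' : e = 1 := by omega
            rw [if_neg (by omega), if_neg (by omega), if_pos ⟨he1', hd0⟩]
            rcases (by omega : d' = 0 ∨ d' = 1) with rfl|rfl
            · exact InIv_hul_left hIn
            · exact InIv_hul_right hIn
          · -- e = 0
            have he0' : e = 0 := by omega
            rw [if_pos ⟨he0', hd0⟩]
            rcases (by omega : d' = 0 ∨ d' = 1) with rfl|rfl
            · exact InIv_hul_right (InIv_hul_left hIn)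
            · exact InIv_hul_right (InIv_hul_right hIn)
      · intro lo hi hB
        by_cases h00 : e = 0 ∧ d = 0
        · rw [if_pos h00] at hB
          obtain ⟨rfl⟩ : e = 0 := h00.1
          obtain ⟨rfl⟩ : d = 0 := h00.2
          obtain ⟨hlo, hhi⟩ := hul4_ends hB
          constructor
          · rw [Dodd]
            rcases hlo with ⟨b, hI⟩|⟨b, hI⟩|⟨b, hI⟩|⟨b, hI⟩
            · obtain ⟨b', hR, hs⟩ := end_lo (by norm_num) (by norm_num) IHh hI
              exact Or.inl ⟨0, 1, b', hR, hs, rfl, by norm_num⟩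
            · obtain ⟨b', hR, hs⟩ := end_lo (by norm_num) (by norm_num) IHh hI
              exact Or.inl ⟨1, 1, b', hR, hs, rfl, by norm_num⟩
            · obtain ⟨b', hR, hs⟩ := end_lo (by norm_num) (by norm_num) IHh1 hI
              exact Or.inr ⟨1, 0, b', hR, hs, by norm_num, rfl⟩
            · obtain ⟨b', hR, hs⟩ := end_lo (by norm_num) (by norm_num) IHh1 hI
              exact Or.inr ⟨1, 1, b', hR, hs, by norm_num, rfl⟩
          · rw [Dodd]
            rcases hhi with ⟨a, hI⟩|⟨a, hI⟩|⟨a, hI⟩|⟨a, hI⟩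
            · obtain ⟨a', hR, hs⟩ := end_hi (by norm_num) (by norm_num) IHh hI
              exact Or.inl ⟨0, 1, a', hR, hs, rfl, by norm_num⟩
            · obtain ⟨a', hR, hs⟩ := end_hi (by norm_num) (by norm_num) IHh hI
              exact Or.inl ⟨1, 1, a', hR, hs, rfl, by norm_num⟩
            · obtain ⟨a', hR, hs⟩ := end_hi (by norm_num) (by norm_num) IHh1 hI
              exact Or.inr ⟨1, 0, a', hR, hs, by norm_num, rfl⟩
            · obtain ⟨a', hR, hs⟩ := end_hi (by norm_num) (by norm_num) IHh1 hI
              exact Or.inr ⟨1, 1, a', hR, hs, by norm_num, rfl⟩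
        · rw [if_neg h00] at hB
          by_cases h01 : e = 0 ∧ d = 1
          · rw [if_pos h01] at hB
            obtain ⟨rfl⟩ : e = 0 := h01.1
            obtain ⟨rfl⟩ : d = 1 := h01.2
            obtain ⟨hlo, hhi⟩ := hul_ends hB
            constructor
            · rw [Dodd]
              rcases hlo with ⟨b, hI⟩|⟨b, hI⟩
              · obtain ⟨b', hR, hs⟩ := end_lo (by norm_num) (by norm_num) IHh hI
                exact Or.inl ⟨0, 0, b', hR, hs, rfl, by norm_num⟩
              · obtain ⟨b', hR, hs⟩ := end_lo (by norm_num) (by norm_num) IHh hI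
                exact Or.inl ⟨1, 0, b', hR, hs, rfl, by norm_num⟩
            · rw [Dodd]
              rcases hhi with ⟨a, hI⟩|⟨a, hI⟩
              · obtain ⟨a', hR, hs⟩ := end_hi (by norm_num) (by norm_num) IHh hI
                exact Or.inl ⟨0, 0, a', hR, hs, rfl, by norm_num⟩
              · obtain ⟨a', hR, hs⟩ := end_hi (by norm_num) (by norm_num) IHh hI
                exact Or.inl ⟨1, 0, a', hR, hs, rfl, by norm_num⟩
          · rw [if_neg h01] at hB
            by_cases h10 : e = 1 ∧ d = 0
            · rw [if_pos h10] at hB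
              obtain ⟨rfl⟩ : e = 1 := h10.1
              obtain ⟨rfl⟩ : d = 0 := h10.2
              obtain ⟨hlo, hhi⟩ := hul_ends hB
              constructor
              · rw [Dodd]
                rcases hlo with ⟨b, hI⟩|⟨b, hI⟩
                · obtain ⟨b', hR, hs⟩ := end_lo (by norm_num) (by norm_num) IHh1 hI
                  exact Or.inr ⟨0, 0, b', hR, hs, by norm_num, rfl⟩
                · obtain ⟨b', hR, hs⟩ := end_lo (by norm_num) (by norm_num) IHh1 hI
                  exact Or.inr ⟨0, 1, b', hR, hs, by norm_num, rfl⟩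
              · rw [Dodd]
                rcases hhi with ⟨a, hI⟩|⟨a, hI⟩
                · obtain ⟨a', hR, hs⟩ := end_hi (by norm_num) (by norm_num) IHh1 hI
                  exact Or.inr ⟨0, 0, a', hR, hs, by norm_num, rfl⟩
                · obtain ⟨a', hR, hs⟩ := end_hi (by norm_num) (by norm_num) IHh1 hI
                  exact Or.inr ⟨0, 1, a', hR, hs, by norm_num, rfl⟩
            · rw [if_neg h10] at hB
              exact absurd hB (by simp)

lemma Bd9_00 : Bd 9 0 0 = some (2, 3) := by
  rw [show (9:ℕ) = 2 * 4 + 1 from rfl, Bd_odd 4 (by norm_num)]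
  norm_num [Bd4_00, Bd4_01, Bd4_10, Bd4_11, Bd5_00, Bd5_01, Bd5_10, Bd5_11, hul, rf]
lemma Bd9_01 : Bd 9 0 1 = some (2, 3) := by
  rw [show (9:ℕ) = 2 * 4 + 1 from rfl, Bd_odd 4 (by norm_num)]
  norm_num [Bd4_00, Bd4_01, Bd4_10, Bd4_11, Bd5_00, Bd5_01, Bd5_10, Bd5_11, hul, rf]
lemma Bd9_10 : Bd 9 1 0 = some (3, 4) := by
  rw [show (9:ℕ) = 2 * 4 + 1 from rfl, Bd_odd 4 (by norm_num)]
  norm_num [Bd4_00, Bd4_01, Bd4_10, Bd4_11, Bd5_00, Bd5_01, Bd5_10, Bd5_11, hul, rf]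
lemma Bd9_11 : Bd 9 1 1 = none := by
  rw [show (9:ℕ) = 2 * 4 + 1 from rfl, Bd_odd 4 (by norm_num)]
  norm_num [Bd4_00, Bd4_01, Bd4_10, Bd4_11, Bd5_00, Bd5_01, Bd5_10, Bd5_11, hul, rf]
lemma Bd10_00 : Bd 10 0 0 = some (2, 4) := by
  rw [show (10:ℕ) = 2 * 5 from rfl, Bd_even 5 (by norm_num)]
  norm_num [Bd5_00, Bd5_01, Bd5_10, Bd5_11, hul, rf]
lemma Bd10_01 : Bd 10 0 1 = some (2, 3) := by
  rw [show (10:ℕ) = 2 * 5 from rfl, Bd_even 5 (by norm_num)]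
  norm_num [Bd5_00, Bd5_01, Bd5_10, Bd5_11, hul, rf]
lemma Bd10_10 : Bd 10 1 0 = some (3, 4) := by
  rw [show (10:ℕ) = 2 * 5 from rfl, Bd_even 5 (by norm_num)]
  norm_num [Bd5_00, Bd5_01, Bd5_10, Bd5_11, hul, rf]
lemma Bd10_11 : Bd 10 1 1 = some (3, 4) := by
  rw [show (10:ℕ) = 2 * 5 from rfl, Bd_even 5 (by norm_num)]
  norm_num [Bd5_00, Bd5_01, Bd5_10, Bd5_11, hul, rf]
lemma Bd11_00 : Bd 11 0 0 = some (3, 4) := by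
  rw [show (11:ℕ) = 2 * 5 + 1 from rfl, Bd_odd 5 (by norm_num)]
  norm_num [Bd5_00, Bd5_01, Bd5_10, Bd5_11, Bd6_00, Bd6_01, Bd6_10, Bd6_11, hul, rf]
lemma Bd11_01 : Bd 11 0 1 = some (2, 4) := by
  rw [show (11:ℕ) = 2 * 5 + 1 from rfl, Bd_odd 5 (by norm_num)]
  norm_num [Bd5_00, Bd5_01, Bd5_10, Bd5_11, Bd6_00, Bd6_01, Bd6_10, Bd6_11, hul, rf]
lemma Bd11_10 : Bd 11 1 0 = some (3, 5) := by
  rw [show (11:ℕ) = 2 * 5 + 1 from rfl, Bd_odd 5 (by norm_num)]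
  norm_num [Bd5_00, Bd5_01, Bd5_10, Bd5_11, Bd6_00, Bd6_01, Bd6_10, Bd6_11, hul, rf]
lemma Bd11_11 : Bd 11 1 1 = none := by
  rw [show (11:ℕ) = 2 * 5 + 1 from rfl, Bd_odd 5 (by norm_num)]
  norm_num [Bd5_00, Bd5_01, Bd5_10, Bd5_11, Bd6_00, Bd6_01, Bd6_10, Bd6_11, hul, rf]
lemma Bd12_00 : Bd 12 0 0 = some (3, 5) := by
  rw [show (12:ℕ) = 2 * 6 from rfl, Bd_even 6 (by norm_num)]
  norm_num [Bd6_00, Bd6_01, Bd6_10, Bd6_11, hul, rf]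
lemma Bd12_01 : Bd 12 0 1 = some (3, 4) := by
  rw [show (12:ℕ) = 2 * 6 from rfl, Bd_even 6 (by norm_num)]
  norm_num [Bd6_00, Bd6_01, Bd6_10, Bd6_11, hul, rf]
lemma Bd12_10 : Bd 12 1 0 = some (4, 5) := by
  rw [show (12:ℕ) = 2 * 6 from rfl, Bd_even 6 (by norm_num)]
  norm_num [Bd6_00, Bd6_01, Bd6_10, Bd6_11, hul, rf]
lemma Bd12_11 : Bd 12 1 1 = some (3, 5) := by
  rw [show (12:ℕ) = 2 * 6 from rfl, Bd_even 6 (by norm_num)]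
  norm_num [Bd6_00, Bd6_01, Bd6_10, Bd6_11, hul, rf]

def ck : ℕ → ℕ
  | 0 => 0
  | k + 1 => 2 ^ k - 1 - ck k

lemma ck_lt : ∀ k, ck k + 1 ≤ 2 ^ k := by
  intro k
  induction k with
  | zero => simp [ck]
  | succ k ih =>
    have h1 : (0:ℕ) < 2 ^ k := Nat.two_pow_pos k
    have h2 : 2 ^ (k+1) = 2 * 2 ^ k := by ring
    simp only [ck]
    omega

lemma ck_sum (k : ℕ) : ck (k + 1) + ck k + 1 = 2 ^ k := by
  have := ck_lt k
  simp only [ck]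
  omega

lemma Bd_wf {m e d a b : ℕ} (he : e < 2) (hd : d < 2) (h : Bd m e d = some (a, b)) :
    a ≤ b ∧ b ≤ m := by
  have hc := Bd_char m e d he hd
  have hRb := (hc.2 a b h).2
  have h1 := Rel_le hRb
  have hIn := hc.1 b hRb
  rw [h] at hIn
  exact ⟨hIn.1, h1⟩

lemma rf_shv' {σ c c' h : ℕ} (hsum : h = c + c' + 1 + σ) {e d : ℕ} (he : e < 2) (hd : d < 2) :
    rf h (shv c (Bd σ e d)) = shv c' (rf σ (Bd σ e d)) := by
  subst hsum
  exact rf_shv σ c c' (Bd σ e d) (fun a b hab => Bd_wf he hd hab)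

lemma PK : ∀ k, 2 ≤ k →
    Bd (2 ^ k) 0 0 = some (ck k, ck k + 1) ∧
    Bd (2 ^ k) 0 1 = some (ck k, ck k) ∧
    Bd (2 ^ k) 1 0 = some (ck k + 1, ck k + 1) ∧
    Bd (2 ^ k) 1 1 = some (ck k, ck k + 1) := by
  intro k hk
  induction k, hk using Nat.le_induction with
  | base =>
    have hc : ck 2 = 1 := by simp [ck]
    rw [show (2:ℕ)^2 = 4 from by norm_num, hc]
    exact ⟨Bd4_00, Bd4_01, Bd4_10, Bd4_11⟩
  | succ k hk ih =>
    obtain ⟨i00, i01, i10, i11⟩ := ih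
    have hpos : 1 ≤ 2 ^ k := Nat.one_le_two_pow
    have hsum := ck_sum k
    have hlt := ck_lt k
    have h2 : (2:ℕ) ^ (k+1) = 2 * 2 ^ k := by ring
    refine ⟨?_, ?_, ?_, ?_⟩ <;> rw [h2, Bd_even (2^k) hpos]
    · rw [if_pos ⟨rfl, rfl⟩, i00, i01, i10, i11]
      simp only [rf, hul]
      congr 1
      rw [Prod.mk.injEq]
      constructor <;> omega
    · rw [if_neg (by norm_num), show (1:ℕ) - 0 = 1 from rfl, show (1:ℕ) - 1 = 0 from rfl, i10]
      simp only [rf]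
      congr 1
      rw [Prod.mk.injEq]
      constructor <;> omega
    · rw [if_neg (by norm_num), show (1:ℕ) - 0 = 1 from rfl, show (1:ℕ) - 1 = 0 from rfl, i01]
      simp only [rf]
      congr 1
      rw [Prod.mk.injEq]
      constructor <;> omega
    · rw [if_neg (by norm_num), show (1:ℕ) - 1 = 0 from rfl, i00]
      simp only [rf]
      congr 1
      rw [Prod.mk.injEq]
      constructor <;> omega

lemma CL1 : ∀ k, 2 ≤ k → ∀ e d, e < 2 → d < 2 →
    Bd (2 ^ k + 1) e d = shv (ck k) (Bd 1 e d) := by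
  intro k hk
  induction k, hk using Nat.le_induction with
  | base =>
    intro e d he hd
    have hc : ck 2 = 1 := by simp [ck]
    rw [show (2:ℕ)^2 + 1 = 5 from by norm_num, hc]
    interval_cases e <;> interval_cases d <;>
      simp [Bd5_00, Bd5_01, Bd5_10, Bd5_11, Bd1_00, Bd1_01, Bd1_10, Bd1_11, shv]
  | succ k hk ih =>
    intro e d he hd
    obtain ⟨i00, i01, i10, i11⟩ := PK k hk
    have hpos : 1 ≤ 2 ^ k := Nat.one_le_two_pow
    have hsum := ck_sum k
    have hlt := ck_lt k
    have h2 : (2:ℕ) ^ (k+1) + 1 = 2 * 2 ^ k + 1 := by ring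
    have y00 := ih 0 0 (by norm_num) (by norm_num)
    have y01 := ih 0 1 (by norm_num) (by norm_num)
    have y10 := ih 1 0 (by norm_num) (by norm_num)
    have y11 := ih 1 1 (by norm_num) (by norm_num)
    rw [h2, Bd_odd (2^k) hpos]
    interval_cases e <;> interval_cases d
    · rw [if_pos ⟨rfl, rfl⟩, i01, i11, y10, y11]
      simp only [Bd1_00, Bd1_10, Bd1_11, shv, rf, hul]
      congr 1
      rw [Prod.mk.injEq]
      constructor <;> omega
    · rw [if_neg (by norm_num), if_pos ⟨rfl, rfl⟩, i00, i10]
      simp only [Bd1_01, shv, rf, hul]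
      congr 1
      rw [Prod.mk.injEq]
      constructor <;> omega
    · rw [if_neg (by norm_num), if_neg (by norm_num), if_pos ⟨rfl, rfl⟩, y00, y01]
      simp only [Bd1_00, Bd1_01, Bd1_10, shv, rf, hul]
      congr 1
      rw [Prod.mk.injEq]
      constructor <;> omega
    · rw [if_neg (by norm_num), if_neg (by norm_num), if_neg (by norm_num), Bd1_11]
      simp [shv]

lemma CL : ∀ k, 3 ≤ k → ∀ ρ, 1 ≤ ρ → ρ ≤ 2 ^ (k - 1) → ∀ e d, e < 2 → d < 2 →
    Bd (2 ^ k + ρ) e d = shv (ck k) (Bd ρ e d) := by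
  intro k hk
  induction k, hk using Nat.le_induction with
  | base =>
    intro ρ h1 h2 e d he hd
    have hc : ck 3 = 2 := by simp [ck]
    rw [hc]
    norm_num at h2
    interval_cases ρ <;> [skip; skip; skip; skip] <;> rw [show (2:ℕ)^3 = 8 from by norm_num]
    · rw [show (8:ℕ) + 1 = 9 from rfl]
      interval_cases e <;> interval_cases d <;>
        simp [Bd9_00, Bd9_01, Bd9_10, Bd9_11, Bd1_00, Bd1_01, Bd1_10, Bd1_11, shv]
    · rw [show (8:ℕ) + 2 = 10 from rfl]
      interval_cases e <;> interval_cases d <;>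
        simp [Bd10_00, Bd10_01, Bd10_10, Bd10_11, Bd2_00, Bd2_01, Bd2_10, Bd2_11, shv]
    · rw [show (8:ℕ) + 3 = 11 from rfl]
      interval_cases e <;> interval_cases d <;>
        simp [Bd11_00, Bd11_01, Bd11_10, Bd11_11, Bd3_00, Bd3_01, Bd3_10, Bd3_11, shv]
    · rw [show (8:ℕ) + 4 = 12 from rfl]
      interval_cases e <;> interval_cases d <;>
        simp [Bd12_00, Bd12_01, Bd12_10, Bd12_11, Bd4_00, Bd4_01, Bd4_10, Bd4_11, shv]
  | succ k hk ih =>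
    intro ρ h1 h2 e d he hd
    have hsum := ck_sum k
    have hlt := ck_lt k
    have hpos : 1 ≤ 2 ^ k := Nat.one_le_two_pow
    obtain ⟨σ, hρ | hρ⟩ := Nat.even_or_odd' ρ
    case inl =>
      subst hρ
      have hσ : 1 ≤ σ := by omega
      -- even rho
      have hσ2 : σ ≤ 2 ^ (k - 1) := by
        have : (2:ℕ)^(k+1-1) = 2 * 2^(k-1) := by
          rw [show k+1-1 = (k-1)+1 from by omega]; ring
        omega
      have hXe : ∀ e' d', e' < 2 → d' < 2 →
          Bd (2 ^ k + σ) e' d' = shv (ck k) (Bd σ e' d') := fun e' d' he' hd' =>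
        ih σ hσ hσ2 e' d' he' hd'
      have hEq : (2:ℕ) ^ (k+1) + 2 * σ = 2 * (2 ^ k + σ) := by ring
      have hpos2 : 1 ≤ 2 ^ k + σ := by omega
      have hrs : ∀ e' d', e' < 2 → d' < 2 →
          rf (2 ^ k + σ) (Bd (2 ^ k + σ) e' d') = shv (ck (k+1)) (rf σ (Bd σ e' d')) := by
        intro e' d' he' hd'
        rw [hXe e' d' he' hd']
        exact rf_shv' (by omega) he' hd'
      rw [hEq, Bd_even (2^k+σ) hpos2, Bd_even σ hσ]
      by_cases h00 : e = 0 ∧ d = 0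
      · rw [if_pos h00, if_pos h00]
        rw [hrs 0 0 (by norm_num) (by norm_num), hrs 0 1 (by norm_num) (by norm_num),
          hrs 1 0 (by norm_num) (by norm_num), hrs 1 1 (by norm_num) (by norm_num)]
        rw [shv_hul, shv_hul, shv_hul]
      · rw [if_neg h00, if_neg h00]
        exact hrs (1-e) (1-d) (by omega) (by omega)
    case inr =>
      subst hρ
      rcases Nat.eq_zero_or_pos σ with rfl | hσ
      · exact CL1 (k+1) (by omega) e d he hd
      -- odd rho
      have hσ2 : σ + 1 ≤ 2 ^ (k - 1) := by
        have : (2:ℕ)^(k+1-1) = 2 * 2^(k-1) := by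
          rw [show k+1-1 = (k-1)+1 from by omega]; ring
        omega
      have hXe : ∀ e' d', e' < 2 → d' < 2 →
          Bd (2 ^ k + σ) e' d' = shv (ck k) (Bd σ e' d') := fun e' d' he' hd' =>
        ih σ hσ (by omega) e' d' he' hd'
      have hYe : ∀ e' d', e' < 2 → d' < 2 →
          Bd (2 ^ k + σ + 1) e' d' = shv (ck k) (Bd (σ+1) e' d') := by
        intro e' d' he' hd'
        rw [show 2^k + σ + 1 = 2^k + (σ+1) from by ring]
        exact ih (σ+1) (by omega) hσ2 e' d' he' hd'
      have hEq : (2:ℕ) ^ (k+1) + (2 * σ + 1) = 2 * (2 ^ k + σ) + 1 := by ring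
      have hpos2 : 1 ≤ 2 ^ k + σ := by omega
      have hrs : ∀ e' d', e' < 2 → d' < 2 →
          rf (2 ^ k + σ) (Bd (2 ^ k + σ) e' d') = shv (ck (k+1)) (rf σ (Bd σ e' d')) := by
        intro e' d' he' hd'
        rw [hXe e' d' he' hd']
        exact rf_shv' (by omega) he' hd'
      have hrs1 : ∀ e' d', e' < 2 → d' < 2 →
          rf (2 ^ k + σ + 1) (Bd (2 ^ k + σ + 1) e' d') = shv (ck (k+1)) (rf (σ+1) (Bd (σ+1) e' d')) := by
        intro e' d' he' hd'
        rw [hYe e' d' he' hd']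
        exact rf_shv' (by omega) he' hd'
      rw [hEq, Bd_odd (2^k+σ) hpos2, Bd_odd σ hσ]
      by_cases h00 : e = 0 ∧ d = 0
      · rw [if_pos h00, if_pos h00]
        rw [hrs 0 1 (by norm_num) (by norm_num), hrs 1 1 (by norm_num) (by norm_num),
          hrs1 1 0 (by norm_num) (by norm_num), hrs1 1 1 (by norm_num) (by norm_num)]
        rw [shv_hul, shv_hul, shv_hul]
      · rw [if_neg h00, if_neg h00]
        by_cases h01 : e = 0 ∧ d = 1
        · rw [if_pos h01, if_pos h01]
          rw [hrs 0 0 (by norm_num) (by norm_num), hrs 1 0 (by norm_num) (by norm_num), shv_hul]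
        · rw [if_neg h01, if_neg h01]
          by_cases h10 : e = 1 ∧ d = 0
          · rw [if_pos h10, if_pos h10]
            rw [hrs1 0 0 (by norm_num) (by norm_num), hrs1 0 1 (by norm_num) (by norm_num), shv_hul]
          · rw [if_neg h10, if_neg h10]
            simp [shv]

lemma uu_split (a s : ℕ) (hs : s < 2) : uu (2 * a + s) = 2 * Pp a + s * pd a := by
  rcases (by omega : s = 0 ∨ s = 1) with rfl|rfl
  · rw [Nat.add_zero, uu_two_mul]; ring
  · rw [uu_two_mul_add_one]; ring

def Aset (n : ℕ) : Set ℕ := {k | ∃ i, uu (i + n) = uu i + k}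

lemma Aset_eq (n : ℕ) : {k | ∃ i, (factorAt xw i n).count 0 = k} = Aset n := by
  ext k
  constructor
  · rintro ⟨i, hc⟩
    exact ⟨i, by rw [count_eq i n, hc]⟩
  · rintro ⟨i, hc⟩
    refine ⟨i, ?_⟩
    have := count_eq i n
    omega

lemma M0_sSup (n : ℕ) : M0 n = sSup (Aset n) := by rw [M0, Aset_eq]

lemma m0_sInf (n : ℕ) : m0 n = sInf (Aset n) := by rw [m0, Aset_eq]

lemma Aset_nonempty (n : ℕ) : (Aset n).Nonempty := ⟨uu n, 0, by simp [uu, Pp]⟩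

lemma Aset_bdd (n : ℕ) : ∀ k ∈ Aset n, k ≤ n := by
  rintro k ⟨i, hi⟩
  have := uu_add_le i n
  omega

lemma M0_eq_of {n UB : ℕ} (h1 : UB ∈ Aset n) (h2 : ∀ k ∈ Aset n, k ≤ UB) : M0 n = UB := by
  rw [M0_sSup]
  exact le_antisymm (csSup_le (Aset_nonempty n) h2) (le_csSup ⟨UB, h2⟩ h1)

lemma m0_eq_of {n LB : ℕ} (h1 : LB ∈ Aset n) (h2 : ∀ k ∈ Aset n, LB ≤ k) : m0 n = LB := by
  rw [m0_sInf]
  exact le_antisymm (Nat.sInf_le h1) (le_csInf (Aset_nonempty n) h2)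

lemma M0_mem (n : ℕ) : M0 n ∈ Aset n := by
  rw [M0_sSup]
  exact Nat.sSup_mem (Aset_nonempty n) ⟨n, Aset_bdd n⟩

lemma m0_mem (n : ℕ) : m0 n ∈ Aset n := by
  rw [m0_sInf]
  exact Nat.sInf_mem (Aset_nonempty n)

lemma le_M0 {n k : ℕ} (h : k ∈ Aset n) : k ≤ M0 n := by
  rw [M0_sSup]
  exact le_csSup ⟨n, Aset_bdd n⟩ h

lemma m0_le {n k : ℕ} (h : k ∈ Aset n) : m0 n ≤ k := by
  rw [m0_sInf]
  exact Nat.sInf_le h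

lemma beven_fwd {m i k : ℕ} (h : uu (i + 2 * m) = uu i + k) :
    ∃ u v e d q, Rel m q e d ∧ ((u = 0 ∧ v = 0) ∨ (u = e ∧ v = d)) ∧ k + u = 2 * q + v := by
  obtain ⟨a, rfl | rfl⟩ := Nat.even_or_odd' i
  · obtain ⟨q, hq⟩ := Rel_exists_q a (a + m) (by omega)
    refine ⟨0, 0, pd a, pd (a + m), q, ⟨a, rfl, rfl, hq⟩, Or.inl ⟨rfl, rfl⟩, ?_⟩
    rw [show 2*a+2*m = 2*(a+m) from by ring, uu_two_mul, uu_two_mul] at h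
    omega
  · obtain ⟨q, hq⟩ := Rel_exists_q a (a + m) (by omega)
    refine ⟨pd a, pd (a + m), pd a, pd (a + m), q, ⟨a, rfl, rfl, hq⟩, Or.inr ⟨rfl, rfl⟩, ?_⟩
    rw [show 2*a+1+2*m = 2*(a+m)+1 from by ring, uu_two_mul_add_one, uu_two_mul_add_one] at h
    omega

lemma beven_bwd {m q e d : ℕ} (hR : Rel m q e d) (u v : ℕ)
    (huv : (u = 0 ∧ v = 0) ∨ (u = e ∧ v = d)) :
    ∃ i, uu (i + 2 * m) + u = uu i + 2 * q + v := by
  obtain ⟨a, ha1, ha2, ha3⟩ := hR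
  rcases huv with ⟨rfl, rfl⟩ | ⟨rfl, rfl⟩
  · refine ⟨2 * a, ?_⟩
    rw [show 2*a+2*m = 2*(a+m) from by ring, uu_two_mul, uu_two_mul, ha3]
    ring
  · refine ⟨2 * a + 1, ?_⟩
    rw [show 2*a+1+2*m = 2*(a+m)+1 from by ring, uu_two_mul_add_one, uu_two_mul_add_one,
      ha1, ha2, ha3]
    ring

lemma bodd_fwd {m i k : ℕ} (h : uu (i + (2 * m + 1)) = uu i + k) :
    (∃ e d q, Rel m q e d ∧ k = 2 * q + d) ∨
    (∃ e d q, Rel (m + 1) q e d ∧ k + e = 2 * q) := by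
  set s := i % 2 with hs
  set a := i / 2 with ha
  have hi : i = 2 * a + s := by omega
  rcases (by omega : s = 0 ∨ s = 1) with h0|h1
  · left
    obtain ⟨q, hq⟩ := Rel_exists_q a (a + m) (by omega)
    refine ⟨pd a, pd (a + m), q, ⟨a, rfl, rfl, hq⟩, ?_⟩
    rw [hi, h0, show 2*a+0+(2*m+1) = 2*(a+m)+1 from by ring, show 2*a+0 = 2*a+0*1 from by ring] at h
    rw [uu_two_mul_add_one (a+m), show (2*a+0*1 : ℕ) = 2*a from by ring, uu_two_mul] at h
    omega
  · right
    obtain ⟨q, hq⟩ := Rel_exists_q a (a + (m + 1)) (by omega)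
    refine ⟨pd a, pd (a + (m + 1)), q, ⟨a, rfl, rfl, hq⟩, ?_⟩
    rw [hi, h1, show 2*a+1+(2*m+1) = 2*(a+(m+1)) from by ring] at h
    rw [uu_two_mul, uu_two_mul_add_one] at h
    omega

lemma bodd_bwd0 {m q e d : ℕ} (hR : Rel m q e d) :
    ∃ i, uu (i + (2 * m + 1)) = uu i + (2 * q + d) := by
  obtain ⟨a, ha1, ha2, ha3⟩ := hR
  refine ⟨2 * a, ?_⟩
  rw [show 2*a+(2*m+1) = 2*(a+m)+1 from by ring, uu_two_mul_add_one, uu_two_mul, ha2, ha3]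
  ring

lemma bodd_bwd1 {m q e d : ℕ} (hR : Rel (m + 1) q e d) :
    ∃ i, uu (i + (2 * m + 1)) + e = uu i + 2 * q := by
  obtain ⟨a, ha1, ha2, ha3⟩ := hR
  refine ⟨2 * a + 1, ?_⟩
  rw [show 2*a+1+(2*m+1) = 2*(a+(m+1)) from by ring, uu_two_mul, uu_two_mul_add_one, ha1, ha3]
  ring

lemma transfer_even {m m' c : ℕ} (hm : 1 ≤ m)
    (H : ∀ e d, e < 2 → d < 2 → Bd m' e d = shv c (Bd m e d)) :
    M0 (2 * m') = 2 * c + 2 + M0 (2 * m) ∧ m0 (2 * m') = 2 * c + m0 (2 * m) := by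
  constructor
  · obtain ⟨i0, hi0⟩ := M0_mem (2 * m)
    obtain ⟨u, v, e, d, q, hR, huv, heq⟩ := beven_fwd hi0
    obtain ⟨he, hd⟩ := Rel_lt hR
    have hch := Bd_char m e d he hd
    have hIn := hch.1 q hR
    rcases hBd : Bd m e d with _ | ⟨lo, hi⟩
    · rw [hBd] at hIn; exact hIn.elim
    rw [hBd] at hIn
    obtain ⟨hInA, hInB⟩ := hIn
    have hRhi := (hch.2 lo hi hBd).2
    have hge : e ≤ hi := Rel_ge hm hRhi
    obtain ⟨j, hj⟩ := beven_bwd hRhi u v huv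
    have h1 := le_M0 (n := 2*m) (k := 2*hi + v - u)
      ⟨j, by rcases huv with ⟨h1,h2⟩|⟨h1,h2⟩ <;> omega⟩
    have hM : M0 (2 * m) + u = 2 * hi + v := by
      rcases huv with ⟨h1,h2⟩|⟨h1,h2⟩ <;> omega
    have hBd' : Bd m' e d = some (c + lo, c + 1 + hi) := by
      rw [H e d he hd, hBd]; rfl
    have hRhi' := ((Bd_char m' e d he hd).2 _ _ hBd').2
    obtain ⟨j', hj'⟩ := beven_bwd hRhi' u v huv
    refine M0_eq_of ⟨j', by rcases huv with ⟨h1,h2⟩|⟨h1,h2⟩ <;> omega⟩ ?_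
    rintro k' ⟨i', hi'⟩
    obtain ⟨u', v', e', d', q', hR', huv', heq'⟩ := beven_fwd hi'
    obtain ⟨he', hd'⟩ := Rel_lt hR'
    have hch2 := Bd_char m e' d' he' hd'
    have hIn' := (Bd_char m' e' d' he' hd').1 q' hR'
    rcases hBd2 : Bd m e' d' with _ | ⟨lo2, hi2⟩
    · rw [H e' d' he' hd', hBd2] at hIn'; exact hIn'.elim
    rw [H e' d' he' hd', hBd2] at hIn'
    obtain ⟨hIn1, hIn2⟩ := hIn'
    have hRhi2 := (hch2.2 lo2 hi2 hBd2).2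
    have hge2 : e' ≤ hi2 := Rel_ge hm hRhi2
    obtain ⟨j2, hj2⟩ := beven_bwd hRhi2 u' v' huv'
    have h12 := le_M0 (n := 2*m) (k := 2*hi2 + v' - u')
      ⟨j2, by rcases huv' with ⟨h1,h2⟩|⟨h1,h2⟩ <;> omega⟩
    simp only [shv] at hIn2
    rcases huv' with ⟨h1,h2⟩|⟨h1,h2⟩ <;> omega
  · obtain ⟨i0, hi0⟩ := m0_mem (2 * m)
    obtain ⟨u, v, e, d, q, hR, huv, heq⟩ := beven_fwd hi0
    obtain ⟨he, hd⟩ := Rel_lt hR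
    have hch := Bd_char m e d he hd
    have hIn := hch.1 q hR
    rcases hBd : Bd m e d with _ | ⟨lo, hi⟩
    · rw [hBd] at hIn; exact hIn.elim
    rw [hBd] at hIn
    obtain ⟨hInA, hInB⟩ := hIn
    have hRlo := (hch.2 lo hi hBd).1
    have hge : e ≤ lo := Rel_ge hm hRlo
    obtain ⟨j, hj⟩ := beven_bwd hRlo u v huv
    have h1 := m0_le (n := 2*m) (k := 2*lo + v - u)
      ⟨j, by rcases huv with ⟨h1,h2⟩|⟨h1,h2⟩ <;> omega⟩
    have hM : m0 (2 * m) + u = 2 * lo + v := by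
      rcases huv with ⟨h1,h2⟩|⟨h1,h2⟩ <;> omega
    have hBd' : Bd m' e d = some (c + lo, c + 1 + hi) := by
      rw [H e d he hd, hBd]; rfl
    have hRlo' := ((Bd_char m' e d he hd).2 _ _ hBd').1
    obtain ⟨j', hj'⟩ := beven_bwd hRlo' u v huv
    refine m0_eq_of ⟨j', by rcases huv with ⟨h1,h2⟩|⟨h1,h2⟩ <;> omega⟩ ?_
    rintro k' ⟨i', hi'⟩
    obtain ⟨u', v', e', d', q', hR', huv', heq'⟩ := beven_fwd hi'
    obtain ⟨he', hd'⟩ := Rel_lt hR'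
    have hch2 := Bd_char m e' d' he' hd'
    have hIn' := (Bd_char m' e' d' he' hd').1 q' hR'
    rcases hBd2 : Bd m e' d' with _ | ⟨lo2, hi2⟩
    · rw [H e' d' he' hd', hBd2] at hIn'; exact hIn'.elim
    rw [H e' d' he' hd', hBd2] at hIn'
    obtain ⟨hIn1, hIn2⟩ := hIn'
    have hRlo2 := (hch2.2 lo2 hi2 hBd2).1
    have hge2 : e' ≤ lo2 := Rel_ge hm hRlo2
    obtain ⟨j2, hj2⟩ := beven_bwd hRlo2 u' v' huv'
    have h12 := m0_le (n := 2*m) (k := 2*lo2 + v' - u')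
      ⟨j2, by rcases huv' with ⟨h1,h2⟩|⟨h1,h2⟩ <;> omega⟩
    simp only [shv] at hIn1
    rcases huv' with ⟨h1,h2⟩|⟨h1,h2⟩ <;> omega

lemma M0_even_eval {m UB : ℕ}
    (hub : ∀ e d q, Rel m q e d → 2 * q ≤ UB ∧ 2 * q + d ≤ UB + e)
    (hex : ∃ e d q u v, Rel m q e d ∧ ((u = 0 ∧ v = 0) ∨ (u = e ∧ v = d)) ∧ UB + u = 2 * q + v) :
    M0 (2 * m) = UB := by
  obtain ⟨e, d, q, u, v, hR, huv, hval⟩ := hex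
  obtain ⟨j, hj⟩ := beven_bwd hR u v huv
  refine M0_eq_of ⟨j, by omega⟩ ?_
  rintro k' ⟨i', hi'⟩
  obtain ⟨u', v', e', d', q', hR', huv', heq'⟩ := beven_fwd hi'
  have h := hub e' d' q' hR'
  rcases huv' with ⟨h1, h2⟩ | ⟨h1, h2⟩ <;> omega

lemma m0_even_eval {m LB : ℕ}
    (hlb : ∀ e d q, Rel m q e d → LB ≤ 2 * q ∧ LB + e ≤ 2 * q + d)
    (hex : ∃ e d q u v, Rel m q e d ∧ ((u = 0 ∧ v = 0) ∨ (u = e ∧ v = d)) ∧ LB + u = 2 * q + v) :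
    m0 (2 * m) = LB := by
  obtain ⟨e, d, q, u, v, hR, huv, hval⟩ := hex
  obtain ⟨j, hj⟩ := beven_bwd hR u v huv
  refine m0_eq_of ⟨j, by omega⟩ ?_
  rintro k' ⟨i', hi'⟩
  obtain ⟨u', v', e', d', q', hR', huv', heq'⟩ := beven_fwd hi'
  have h := hlb e' d' q' hR'
  rcases huv' with ⟨h1, h2⟩ | ⟨h1, h2⟩ <;> omega

lemma M0_odd_eval {m UB : ℕ}
    (hub1 : ∀ e d q, Rel m q e d → 2 * q + d ≤ UB)
    (hub2 : ∀ e d q, Rel (m + 1) q e d → 2 * q ≤ UB + e)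
    (hex : (∃ e d q, Rel m q e d ∧ 2 * q + d = UB) ∨
           (∃ e d q, Rel (m + 1) q e d ∧ 2 * q = UB + e)) :
    M0 (2 * m + 1) = UB := by
  have hmem : UB ∈ Aset (2 * m + 1) := by
    rcases hex with ⟨e, d, q, hR, hval⟩ | ⟨e, d, q, hR, hval⟩
    · obtain ⟨j, hj⟩ := bodd_bwd0 hR
      exact ⟨j, by omega⟩
    · have hge : e ≤ q := Rel_ge (by omega) hR
      obtain ⟨j, hj⟩ := bodd_bwd1 hR
      exact ⟨j, by omega⟩
  refine M0_eq_of hmem ?_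
  rintro k' ⟨i', hi'⟩
  rcases bodd_fwd hi' with ⟨e, d, q, hR, heq⟩ | ⟨e, d, q, hR, heq⟩
  · have := hub1 e d q hR; omega
  · have := hub2 e d q hR; omega

lemma m0_odd_eval {m LB : ℕ}
    (hlb1 : ∀ e d q, Rel m q e d → LB ≤ 2 * q + d)
    (hlb2 : ∀ e d q, Rel (m + 1) q e d → LB + e ≤ 2 * q)
    (hex : (∃ e d q, Rel m q e d ∧ 2 * q + d = LB) ∨
           (∃ e d q, Rel (m + 1) q e d ∧ 2 * q = LB + e)) :
    m0 (2 * m + 1) = LB := by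
  have hmem : LB ∈ Aset (2 * m + 1) := by
    rcases hex with ⟨e, d, q, hR, hval⟩ | ⟨e, d, q, hR, hval⟩
    · obtain ⟨j, hj⟩ := bodd_bwd0 hR
      exact ⟨j, by omega⟩
    · have hge : e ≤ q := Rel_ge (by omega) hR
      obtain ⟨j, hj⟩ := bodd_bwd1 hR
      exact ⟨j, by omega⟩
  refine m0_eq_of hmem ?_
  rintro k' ⟨i', hi'⟩
  rcases bodd_fwd hi' with ⟨e, d, q, hR, heq⟩ | ⟨e, d, q, hR, heq⟩
  · have := hlb1 e d q hR; omega
  · have := hlb2 e d q hR; omega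

lemma transfer_odd {m m' c : ℕ} (hm : 1 ≤ m)
    (H1 : ∀ e d, e < 2 → d < 2 → Bd m' e d = shv c (Bd m e d))
    (H2 : ∀ e d, e < 2 → d < 2 → Bd (m' + 1) e d = shv c (Bd (m + 1) e d)) :
    M0 (2 * m' + 1) = 2 * c + 2 + M0 (2 * m + 1) ∧
    m0 (2 * m' + 1) = 2 * c + m0 (2 * m + 1) := by
  have hub : ∀ k' ∈ Aset (2 * m' + 1), k' ≤ 2 * c + 2 + M0 (2 * m + 1) := by
    rintro k' ⟨i', hi'⟩
    rcases bodd_fwd hi' with ⟨e, d, q, hR, heq⟩ | ⟨e, d, q, hR, heq⟩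
    · obtain ⟨he, hd⟩ := Rel_lt hR
      have hIn := (Bd_char m' e d he hd).1 q hR
      rcases hBd : Bd m e d with _ | ⟨lo, hi⟩
      · rw [H1 e d he hd, hBd] at hIn; exact hIn.elim
      rw [H1 e d he hd, hBd] at hIn
      obtain ⟨hIn1, hIn2⟩ := hIn
      simp only [shv] at hIn2
      have hRhi := ((Bd_char m e d he hd).2 lo hi hBd).2
      obtain ⟨j, hj⟩ := bodd_bwd0 hRhi
      have h1 := le_M0 (n := 2*m+1) (k := 2 * hi + d) ⟨j, hj⟩
      omega
    · obtain ⟨he, hd⟩ := Rel_lt hR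
      have hIn := (Bd_char (m' + 1) e d he hd).1 q hR
      rcases hBd : Bd (m + 1) e d with _ | ⟨lo, hi⟩
      · rw [H2 e d he hd, hBd] at hIn; exact hIn.elim
      rw [H2 e d he hd, hBd] at hIn
      obtain ⟨hIn1, hIn2⟩ := hIn
      simp only [shv] at hIn2
      have hRhi := ((Bd_char (m + 1) e d he hd).2 lo hi hBd).2
      have hge : e ≤ hi := Rel_ge (by omega) hRhi
      obtain ⟨j, hj⟩ := bodd_bwd1 hRhi
      have h1 := le_M0 (n := 2*m+1) (k := 2 * hi - e) ⟨j, by omega⟩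
      omega
  have hlb : ∀ k' ∈ Aset (2 * m' + 1), 2 * c + m0 (2 * m + 1) ≤ k' := by
    rintro k' ⟨i', hi'⟩
    rcases bodd_fwd hi' with ⟨e, d, q, hR, heq⟩ | ⟨e, d, q, hR, heq⟩
    · obtain ⟨he, hd⟩ := Rel_lt hR
      have hIn := (Bd_char m' e d he hd).1 q hR
      rcases hBd : Bd m e d with _ | ⟨lo, hi⟩
      · rw [H1 e d he hd, hBd] at hIn; exact hIn.elim
      rw [H1 e d he hd, hBd] at hIn
      obtain ⟨hIn1, hIn2⟩ := hIn
      simp only [shv] at hIn1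
      have hRlo := ((Bd_char m e d he hd).2 lo hi hBd).1
      obtain ⟨j, hj⟩ := bodd_bwd0 hRlo
      have h1 := m0_le (n := 2*m+1) (k := 2 * lo + d) ⟨j, hj⟩
      omega
    · obtain ⟨he, hd⟩ := Rel_lt hR
      have hIn := (Bd_char (m' + 1) e d he hd).1 q hR
      rcases hBd : Bd (m + 1) e d with _ | ⟨lo, hi⟩
      · rw [H2 e d he hd, hBd] at hIn; exact hIn.elim
      rw [H2 e d he hd, hBd] at hIn
      obtain ⟨hIn1, hIn2⟩ := hIn
      simp only [shv] at hIn1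
      have hRlo := ((Bd_char (m + 1) e d he hd).2 lo hi hBd).1
      have hge : e ≤ lo := Rel_ge (by omega) hRlo
      obtain ⟨j, hj⟩ := bodd_bwd1 hRlo
      have h1 := m0_le (n := 2*m+1) (k := 2 * lo - e) ⟨j, by omega⟩
      omega
  constructor
  · -- M0
    obtain ⟨i0, hi0⟩ := M0_mem (2 * m + 1)
    have hmem : (2 * c + 2 + M0 (2 * m + 1)) ∈ Aset (2 * m' + 1) := by
      rcases bodd_fwd hi0 with ⟨e, d, q, hR, heq⟩ | ⟨e, d, q, hR, heq⟩
      · obtain ⟨he, hd⟩ := Rel_lt hR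
        have hch := Bd_char m e d he hd
        have hIn := hch.1 q hR
        rcases hBd : Bd m e d with _ | ⟨lo, hi⟩
        · rw [hBd] at hIn; exact hIn.elim
        rw [hBd] at hIn
        obtain ⟨hIn1, hIn2⟩ := hIn
        have hRhi := (hch.2 lo hi hBd).2
        obtain ⟨j, hj⟩ := bodd_bwd0 hRhi
        have h1 := le_M0 (n := 2*m+1) (k := 2 * hi + d) ⟨j, hj⟩
        have hM : M0 (2 * m + 1) = 2 * hi + d := by omega
        have hBd' : Bd m' e d = some (c + lo, c + 1 + hi) := by
          rw [H1 e d he hd, hBd]; rfl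
        have hRhi' := ((Bd_char m' e d he hd).2 _ _ hBd').2
        obtain ⟨j', hj'⟩ := bodd_bwd0 hRhi'
        exact ⟨j', by omega⟩
      · obtain ⟨he, hd⟩ := Rel_lt hR
        have hch := Bd_char (m + 1) e d he hd
        have hIn := hch.1 q hR
        rcases hBd : Bd (m + 1) e d with _ | ⟨lo, hi⟩
        · rw [hBd] at hIn; exact hIn.elim
        rw [hBd] at hIn
        obtain ⟨hIn1, hIn2⟩ := hIn
        have hRhi := (hch.2 lo hi hBd).2
        have hge : e ≤ hi := Rel_ge (by omega) hRhi
        obtain ⟨j, hj⟩ := bodd_bwd1 hRhi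
        have h1 := le_M0 (n := 2*m+1) (k := 2 * hi - e) ⟨j, by omega⟩
        have hM : M0 (2 * m + 1) + e = 2 * hi := by omega
        have hBd' : Bd (m' + 1) e d = some (c + lo, c + 1 + hi) := by
          rw [H2 e d he hd, hBd]; rfl
        have hRhi' := ((Bd_char (m' + 1) e d he hd).2 _ _ hBd').2
        obtain ⟨j', hj'⟩ := bodd_bwd1 hRhi'
        exact ⟨j', by omega⟩
    exact M0_eq_of hmem hub
  · -- m0
    obtain ⟨i0, hi0⟩ := m0_mem (2 * m + 1)
    have hmem : (2 * c + m0 (2 * m + 1)) ∈ Aset (2 * m' + 1) := by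
      rcases bodd_fwd hi0 with ⟨e, d, q, hR, heq⟩ | ⟨e, d, q, hR, heq⟩
      · obtain ⟨he, hd⟩ := Rel_lt hR
        have hch := Bd_char m e d he hd
        have hIn := hch.1 q hR
        rcases hBd : Bd m e d with _ | ⟨lo, hi⟩
        · rw [hBd] at hIn; exact hIn.elim
        rw [hBd] at hIn
        obtain ⟨hIn1, hIn2⟩ := hIn
        have hRlo := (hch.2 lo hi hBd).1
        obtain ⟨j, hj⟩ := bodd_bwd0 hRlo
        have h1 := m0_le (n := 2*m+1) (k := 2 * lo + d) ⟨j, hj⟩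
        have hM : m0 (2 * m + 1) = 2 * lo + d := by omega
        have hBd' : Bd m' e d = some (c + lo, c + 1 + hi) := by
          rw [H1 e d he hd, hBd]; rfl
        have hRlo' := ((Bd_char m' e d he hd).2 _ _ hBd').1
        obtain ⟨j', hj'⟩ := bodd_bwd0 hRlo'
        exact ⟨j', by omega⟩
      · obtain ⟨he, hd⟩ := Rel_lt hR
        have hch := Bd_char (m + 1) e d he hd
        have hIn := hch.1 q hR
        rcases hBd : Bd (m + 1) e d with _ | ⟨lo, hi⟩
        · rw [hBd] at hIn; exact hIn.elim
        rw [hBd] at hIn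
        obtain ⟨hIn1, hIn2⟩ := hIn
        have hRlo := (hch.2 lo hi hBd).1
        have hge : e ≤ lo := Rel_ge (by omega) hRlo
        obtain ⟨j, hj⟩ := bodd_bwd1 hRlo
        have h1 := m0_le (n := 2*m+1) (k := 2 * lo - e) ⟨j, by omega⟩
        have hM : m0 (2 * m + 1) + e = 2 * lo := by omega
        have hBd' : Bd (m' + 1) e d = some (c + lo, c + 1 + hi) := by
          rw [H2 e d he hd, hBd]; rfl
        have hRlo' := ((Bd_char (m' + 1) e d he hd).2 _ _ hBd').1
        obtain ⟨j', hj'⟩ := bodd_bwd1 hRlo'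
        exact ⟨j', by omega⟩
    exact m0_eq_of hmem hlb

lemma hub_tab {m : ℕ} {I00 I01 I10 I11 : Iv}
    (h00 : Bd m 0 0 = I00) (h01 : Bd m 0 1 = I01) (h10 : Bd m 1 0 = I10) (h11 : Bd m 1 1 = I11)
    {e d q : ℕ} (hR : Rel m q e d) :
    (e = 0 ∧ d = 0 ∧ InIv q I00) ∨ (e = 0 ∧ d = 1 ∧ InIv q I01) ∨
    (e = 1 ∧ d = 0 ∧ InIv q I10) ∨ (e = 1 ∧ d = 1 ∧ InIv q I11) := by
  obtain ⟨he, hd⟩ := Rel_lt hR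
  have hIn := (Bd_char m e d he hd).1 q hR
  interval_cases e <;> interval_cases d
  · exact Or.inl ⟨rfl, rfl, h00 ▸ hIn⟩
  · exact Or.inr (Or.inl ⟨rfl, rfl, h01 ▸ hIn⟩)
  · exact Or.inr (Or.inr (Or.inl ⟨rfl, rfl, h10 ▸ hIn⟩))
  · exact Or.inr (Or.inr (Or.inr ⟨rfl, rfl, h11 ▸ hIn⟩))

lemma relhi {m e d lo hi : ℕ} (he : e < 2) (hd : d < 2) (h : Bd m e d = some (lo, hi)) :
    Rel m hi e d := ((Bd_char m e d he hd).2 lo hi h).2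

lemma rello {m e d lo hi : ℕ} (he : e < 2) (hd : d < 2) (h : Bd m e d = some (lo, hi)) :
    Rel m lo e d := ((Bd_char m e d he hd).2 lo hi h).1

lemma M0_0 : M0 0 = 0 := by
  refine M0_eq_of ⟨0, by simp⟩ ?_
  rintro k ⟨i, hi⟩
  simp only [Nat.add_zero] at hi
  omega

lemma m0_0 : m0 0 = 0 := by
  refine m0_eq_of ⟨0, by simp⟩ ?_
  rintro k ⟨i, hi⟩
  exact Nat.zero_le k

lemma M0_1 : M0 1 = 1 := by
  rw [show (1:ℕ) = 2 * 0 + 1 from rfl]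
  refine M0_odd_eval ?_ ?_ (Or.inl ⟨1, 1, 0, relhi (by norm_num) (by norm_num) Bd0_11, by norm_num⟩)
  · intro e d q hR
    rcases hub_tab Bd0_00 Bd0_01 Bd0_10 Bd0_11 hR with ⟨_,_,h⟩|⟨_,_,h⟩|⟨_,_,h⟩|⟨_,_,h⟩ <;>
      simp only [InIv] at h <;> omega
  · intro e d q hR
    rcases hub_tab Bd1_00 Bd1_01 Bd1_10 Bd1_11 hR with ⟨_,_,h⟩|⟨_,_,h⟩|⟨_,_,h⟩|⟨_,_,h⟩ <;>
      simp only [InIv] at h <;> omega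

lemma m0_1 : m0 1 = 0 := by
  rw [show (1:ℕ) = 2 * 0 + 1 from rfl]
  refine m0_odd_eval ?_ ?_ (Or.inl ⟨0, 0, 0, relhi (by norm_num) (by norm_num) Bd0_00, by norm_num⟩)
  · intro e d q hR
    exact Nat.zero_le _
  · intro e d q hR
    have := Rel_ge (by omega) hR
    omega

lemma M0_2 : M0 2 = 2 := by
  rw [show (2:ℕ) = 2 * 1 from rfl]
  refine M0_even_eval ?_ ⟨1, 0, 1, 0, 0, relhi (by norm_num) (by norm_num) Bd1_10,
    Or.inl ⟨rfl, rfl⟩, by norm_num⟩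
  intro e d q hR
  rcases hub_tab Bd1_00 Bd1_01 Bd1_10 Bd1_11 hR with ⟨_,_,h⟩|⟨_,_,h⟩|⟨_,_,h⟩|⟨_,_,h⟩ <;>
    simp only [InIv] at h <;> omega

lemma m0_2 : m0 2 = 0 := by
  rw [show (2:ℕ) = 2 * 1 from rfl]
  refine m0_even_eval ?_ ⟨0, 0, 0, 0, 0, rello (by norm_num) (by norm_num) Bd1_00,
    Or.inl ⟨rfl, rfl⟩, by norm_num⟩
  intro e d q hR
  rcases hub_tab Bd1_00 Bd1_01 Bd1_10 Bd1_11 hR with ⟨_,_,h⟩|⟨_,_,h⟩|⟨_,_,h⟩|⟨_,_,h⟩ <;>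
    simp only [InIv] at h <;> omega

lemma M0_3 : M0 3 = 2 := by
  rw [show (3:ℕ) = 2 * 1 + 1 from rfl]
  refine M0_odd_eval ?_ ?_ (Or.inl ⟨1, 0, 1, relhi (by norm_num) (by norm_num) Bd1_10, by norm_num⟩)
  · intro e d q hR
    rcases hub_tab Bd1_00 Bd1_01 Bd1_10 Bd1_11 hR with ⟨_,_,h⟩|⟨_,_,h⟩|⟨_,_,h⟩|⟨_,_,h⟩ <;>
      simp only [InIv] at h <;> omega
  · intro e d q hR
    rcases hub_tab Bd2_00 Bd2_01 Bd2_10 Bd2_11 hR with ⟨_,_,h⟩|⟨_,_,h⟩|⟨_,_,h⟩|⟨_,_,h⟩ <;>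
      simp only [InIv] at h <;> omega

lemma m0_3 : m0 3 = 0 := by
  rw [show (3:ℕ) = 2 * 1 + 1 from rfl]
  refine m0_odd_eval ?_ ?_ (Or.inl ⟨0, 0, 0, rello (by norm_num) (by norm_num) Bd1_00, by norm_num⟩)
  · intro e d q hR
    exact Nat.zero_le _
  · intro e d q hR
    have := Rel_ge (by omega) hR
    omega

lemma M0_4 : M0 4 = 2 := by
  rw [show (4:ℕ) = 2 * 2 from rfl]
  refine M0_even_eval ?_ ⟨0, 0, 1, 0, 0, relhi (by norm_num) (by norm_num) Bd2_00,
    Or.inl ⟨rfl, rfl⟩, by norm_num⟩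
  intro e d q hR
  rcases hub_tab Bd2_00 Bd2_01 Bd2_10 Bd2_11 hR with ⟨_,_,h⟩|⟨_,_,h⟩|⟨_,_,h⟩|⟨_,_,h⟩ <;>
    simp only [InIv] at h <;> omega

lemma m0_4 : m0 4 = 0 := by
  rw [show (4:ℕ) = 2 * 2 from rfl]
  refine m0_even_eval ?_ ⟨0, 1, 0, 0, 0, rello (by norm_num) (by norm_num) Bd2_01,
    Or.inl ⟨rfl, rfl⟩, by norm_num⟩
  intro e d q hR
  rcases hub_tab Bd2_00 Bd2_01 Bd2_10 Bd2_11 hR with ⟨_,_,h⟩|⟨_,_,h⟩|⟨_,_,h⟩|⟨_,_,h⟩ <;>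
    simp only [InIv] at h <;> omega

lemma M0_5 : M0 5 = 3 := by
  rw [show (5:ℕ) = 2 * 2 + 1 from rfl]
  refine M0_odd_eval ?_ ?_ (Or.inl ⟨1, 1, 1, relhi (by norm_num) (by norm_num) Bd2_11, by norm_num⟩)
  · intro e d q hR
    rcases hub_tab Bd2_00 Bd2_01 Bd2_10 Bd2_11 hR with ⟨_,_,h⟩|⟨_,_,h⟩|⟨_,_,h⟩|⟨_,_,h⟩ <;>
      simp only [InIv] at h <;> omega
  · intro e d q hR
    rcases hub_tab Bd3_00 Bd3_01 Bd3_10 Bd3_11 hR with ⟨_,_,h⟩|⟨_,_,h⟩|⟨_,_,h⟩|⟨_,_,h⟩ <;>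
      simp only [InIv] at h <;> omega

lemma m0_5 : m0 5 = 0 := by
  rw [show (5:ℕ) = 2 * 2 + 1 from rfl]
  refine m0_odd_eval ?_ ?_ (Or.inl ⟨0, 0, 0, rello (by norm_num) (by norm_num) Bd2_00, by norm_num⟩)
  · intro e d q hR
    exact Nat.zero_le _
  · intro e d q hR
    have := Rel_ge (by omega) hR
    omega

lemma M0_6 : M0 6 = 4 := by
  rw [show (6:ℕ) = 2 * 3 from rfl]
  refine M0_even_eval ?_ ⟨1, 0, 2, 0, 0, relhi (by norm_num) (by norm_num) Bd3_10,
    Or.inl ⟨rfl, rfl⟩, by norm_num⟩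
  intro e d q hR
  rcases hub_tab Bd3_00 Bd3_01 Bd3_10 Bd3_11 hR with ⟨_,_,h⟩|⟨_,_,h⟩|⟨_,_,h⟩|⟨_,_,h⟩ <;>
    simp only [InIv] at h <;> omega

lemma m0_6 : m0 6 = 0 := by
  rw [show (6:ℕ) = 2 * 3 from rfl]
  refine m0_even_eval ?_ ⟨0, 1, 0, 0, 0, rello (by norm_num) (by norm_num) Bd3_01,
    Or.inl ⟨rfl, rfl⟩, by norm_num⟩
  intro e d q hR
  rcases hub_tab Bd3_00 Bd3_01 Bd3_10 Bd3_11 hR with ⟨_,_,h⟩|⟨_,_,h⟩|⟨_,_,h⟩|⟨_,_,h⟩ <;>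
    simp only [InIv] at h <;> omega

lemma M0_11 : M0 11 = 6 := by
  rw [show (11:ℕ) = 2 * 5 + 1 from rfl]
  refine M0_odd_eval ?_ ?_ (Or.inl ⟨1, 0, 3, relhi (by norm_num) (by norm_num) Bd5_10, by norm_num⟩)
  · intro e d q hR
    rcases hub_tab Bd5_00 Bd5_01 Bd5_10 Bd5_11 hR with ⟨_,_,h⟩|⟨_,_,h⟩|⟨_,_,h⟩|⟨_,_,h⟩ <;>
      simp only [InIv] at h <;> omega
  · intro e d q hR
    rcases hub_tab Bd6_00 Bd6_01 Bd6_10 Bd6_11 hR with ⟨_,_,h⟩|⟨_,_,h⟩|⟨_,_,h⟩|⟨_,_,h⟩ <;>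
      simp only [InIv] at h <;> omega

lemma m0_11 : m0 11 = 2 := by
  rw [show (11:ℕ) = 2 * 5 + 1 from rfl]
  refine m0_odd_eval ?_ ?_ (Or.inl ⟨0, 0, 1, rello (by norm_num) (by norm_num) Bd5_00, by norm_num⟩)
  · intro e d q hR
    rcases hub_tab Bd5_00 Bd5_01 Bd5_10 Bd5_11 hR with ⟨_,_,h⟩|⟨_,_,h⟩|⟨_,_,h⟩|⟨_,_,h⟩ <;>
      simp only [InIv] at h <;> omega
  · intro e d q hR
    rcases hub_tab Bd6_00 Bd6_01 Bd6_10 Bd6_11 hR with ⟨_,_,h⟩|⟨_,_,h⟩|⟨_,_,h⟩|⟨_,_,h⟩ <;>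
      simp only [InIv] at h <;> omega

lemma M0_12 : M0 12 = 6 := by
  rw [show (12:ℕ) = 2 * 6 from rfl]
  refine M0_even_eval ?_ ⟨1, 0, 3, 0, 0, relhi (by norm_num) (by norm_num) Bd6_10,
    Or.inl ⟨rfl, rfl⟩, by norm_num⟩
  intro e d q hR
  rcases hub_tab Bd6_00 Bd6_01 Bd6_10 Bd6_11 hR with ⟨_,_,h⟩|⟨_,_,h⟩|⟨_,_,h⟩|⟨_,_,h⟩ <;>
    simp only [InIv] at h <;> omega

lemma m0_12 : m0 12 = 2 := by
  rw [show (12:ℕ) = 2 * 6 from rfl]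
  refine m0_even_eval ?_ ⟨0, 0, 1, 0, 0, rello (by norm_num) (by norm_num) Bd6_00,
    Or.inl ⟨rfl, rfl⟩, by norm_num⟩
  intro e d q hR
  rcases hub_tab Bd6_00 Bd6_01 Bd6_10 Bd6_11 hR with ⟨_,_,h⟩|⟨_,_,h⟩|⟨_,_,h⟩|⟨_,_,h⟩ <;>
    simp only [InIv] at h <;> omega

lemma M0m0_pow (k : ℕ) (hk : 2 ≤ k) :
    M0 (2 ^ (k + 1)) = 2 * ck k + 2 ∧ m0 (2 ^ (k + 1)) = 2 * ck k := by
  obtain ⟨i00, i01, i10, i11⟩ := PK k hk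
  rw [show (2:ℕ)^(k+1) = 2 * 2^k from by ring]
  constructor
  · refine M0_even_eval ?_ ⟨0, 0, ck k + 1, 0, 0, relhi (by norm_num) (by norm_num) i00,
      Or.inl ⟨rfl, rfl⟩, by ring⟩
    intro e d q hR
    rcases hub_tab i00 i01 i10 i11 hR with ⟨_,_,h⟩|⟨_,_,h⟩|⟨_,_,h⟩|⟨_,_,h⟩ <;>
      simp only [InIv] at h <;> omega
  · refine m0_even_eval ?_ ⟨0, 0, ck k, 0, 0, rello (by norm_num) (by norm_num) i00,
      Or.inl ⟨rfl, rfl⟩, by ring⟩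
    intro e d q hR
    rcases hub_tab i00 i01 i10 i11 hR with ⟨_,_,h⟩|⟨_,_,h⟩|⟨_,_,h⟩|⟨_,_,h⟩ <;>
      simp only [InIv] at h <;> omega

lemma M0m0_pow1 (k : ℕ) (hk : 2 ≤ k) :
    M0 (2 ^ (k + 1) + 1) = 2 * ck k + 3 ∧ m0 (2 ^ (k + 1) + 1) = 2 * ck k := by
  obtain ⟨i00, i01, i10, i11⟩ := PK k hk
  have y00 : Bd (2^k + 1) 0 0 = some (ck k, ck k + 1) := by
    rw [CL1 k hk 0 0 (by norm_num) (by norm_num), Bd1_00]; rfl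
  have y01 : Bd (2^k + 1) 0 1 = some (ck k, ck k + 1) := by
    rw [CL1 k hk 0 1 (by norm_num) (by norm_num), Bd1_01]; rfl
  have y10 : Bd (2^k + 1) 1 0 = some (ck k + 1, ck k + 2) := by
    rw [CL1 k hk 1 0 (by norm_num) (by norm_num), Bd1_10]
    rfl
  have y11 : Bd (2^k + 1) 1 1 = none := by
    rw [CL1 k hk 1 1 (by norm_num) (by norm_num), Bd1_11]; rfl
  rw [show (2:ℕ)^(k+1) + 1 = 2 * 2^k + 1 from by ring]
  constructor
  · refine M0_odd_eval ?_ ?_ (Or.inl ⟨1, 1, ck k + 1,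
      relhi (by norm_num) (by norm_num) i11, by ring⟩)
    · intro e d q hR
      rcases hub_tab i00 i01 i10 i11 hR with ⟨_,_,h⟩|⟨_,_,h⟩|⟨_,_,h⟩|⟨_,_,h⟩ <;>
        simp only [InIv] at h <;> omega
    · intro e d q hR
      rcases hub_tab y00 y01 y10 y11 hR with ⟨_,_,h⟩|⟨_,_,h⟩|⟨_,_,h⟩|⟨_,_,h⟩ <;>
        simp only [InIv] at h <;> omega
  · refine m0_odd_eval ?_ ?_ (Or.inr ⟨0, 0, ck k,
      rello (by norm_num) (by norm_num) y00, by ring⟩)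
    · intro e d q hR
      rcases hub_tab i00 i01 i10 i11 hR with ⟨_,_,h⟩|⟨_,_,h⟩|⟨_,_,h⟩|⟨_,_,h⟩ <;>
        simp only [InIv] at h <;> omega
    · intro e d q hR
      rcases hub_tab y00 y01 y10 y11 hR with ⟨_,_,h⟩|⟨_,_,h⟩|⟨_,_,h⟩|⟨_,_,h⟩ <;>
        simp only [InIv] at h <;> omega

end PDaux

open PDaux

theorem stmt11 (l r : ℕ) (hl : 2 ≤ l) (hr : 2 * r ≤ 2 ^ l) :
    M0 (2 ^ l + r) = M0 (2 ^ l) + M0 r ∧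
    m0 (2 ^ l + r) = m0 (2 ^ l) + m0 r := by
  have hck2 : ck 2 = 1 := by simp [ck]
  rcases (by omega : l = 2 ∨ l = 3 ∨ 4 ≤ l) with rfl | rfl | hl4
  · -- l = 2
    have hr2 : r ≤ 2 := by norm_num at hr; omega
    interval_cases r
    · norm_num [M0_0, m0_0]
    · rw [show (2:ℕ)^2 + 1 = 5 from by norm_num, show (2:ℕ)^2 = 4 from by norm_num,
        M0_5, M0_4, M0_1, m0_5, m0_4, m0_1]
      norm_num
    · rw [show (2:ℕ)^2 + 2 = 6 from by norm_num, show (2:ℕ)^2 = 4 from by norm_num,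
        M0_6, M0_4, M0_2, m0_6, m0_4, m0_2]
      norm_num
  · -- l = 3
    have hr4 : r ≤ 4 := by norm_num at hr; omega
    have hpow := M0m0_pow 2 le_rfl
    rw [show (2:ℕ)^(2+1) = 8 from by norm_num, hck2] at hpow
    have hM8 : M0 8 = 4 := by omega
    have hm8 : m0 8 = 2 := by omega
    interval_cases r
    · rw [show (2:ℕ)^3 + 0 = 8 from by norm_num, show (2:ℕ)^3 = 8 from by norm_num,
        M0_0, m0_0]
      norm_num
    · have hpow1 := M0m0_pow1 2 le_rfl
      rw [show (2:ℕ)^(2+1) + 1 = 9 from by norm_num, hck2] at hpow1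
      rw [show (2:ℕ)^3 + 1 = 9 from by norm_num, show (2:ℕ)^3 = 8 from by norm_num,
        hM8, hm8, M0_1, m0_1]
      omega
    · have ht := transfer_even (m := 1) (m' := 2^2 + 1) (c := ck 2) le_rfl
        (fun e d he hd => CL1 2 le_rfl e d he hd)
      obtain ⟨ht1, ht2⟩ := ht
      rw [show (2:ℕ) * (2^2 + 1) = 10 from by norm_num, show (2:ℕ) * 1 = 2 from by norm_num,
        hck2, M0_2] at ht1
      rw [show (2:ℕ) * (2^2 + 1) = 10 from by norm_num, show (2:ℕ) * 1 = 2 from by norm_num,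
        hck2, m0_2] at ht2
      rw [show (2:ℕ)^3 + 2 = 10 from by norm_num, show (2:ℕ)^3 = 8 from by norm_num,
        hM8, hm8, M0_2, m0_2, ht1, ht2]
      norm_num
    · rw [show (2:ℕ)^3 + 3 = 11 from by norm_num, show (2:ℕ)^3 = 8 from by norm_num,
        M0_11, m0_11, hM8, hm8, M0_3, m0_3]
      norm_num
    · rw [show (2:ℕ)^3 + 4 = 12 from by norm_num, show (2:ℕ)^3 = 8 from by norm_num,
        M0_12, m0_12, hM8, hm8, M0_4, m0_4]
      norm_num
  · -- l ≥ 4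
    obtain ⟨k, rfl⟩ : ∃ k, l = k + 1 := ⟨l - 1, by omega⟩
    have hk3 : 3 ≤ k := by omega
    have hpow := M0m0_pow k (by omega)
    have hrk : r ≤ 2 ^ k := by
      have : (2:ℕ)^(k+1) = 2 * 2^k := by ring
      omega
    have h2k : (2:ℕ)^k = 2 * 2^(k-1) := by
      conv_lhs => rw [show k = (k-1)+1 from by omega]
      ring
    rcases Nat.eq_zero_or_pos r with rfl | hrpos
    · rw [Nat.add_zero, M0_0, m0_0]
      omega
    rcases (by omega : r = 1 ∨ 2 ≤ r) with rfl | hr2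
    · have hpow1 := M0m0_pow1 k (by omega)
      rw [hpow1.1, hpow1.2, hpow.1, hpow.2, M0_1, m0_1]
      omega
    obtain ⟨σ, hσeq | hσeq⟩ := Nat.even_or_odd' r
    · -- r = 2σ
      subst hσeq
      have hσ1 : 1 ≤ σ := by omega
      have hσ2 : σ ≤ 2 ^ (k - 1) := by omega
      have ht := transfer_even (m := σ) (m' := 2^k + σ) (c := ck k) hσ1
        (fun e d he hd => CL k hk3 σ hσ1 hσ2 e d he hd)
      rw [show 2 * (2^k + σ) = 2^(k+1) + 2 * σ from by ring] at ht
      rw [ht.1, ht.2, hpow.1, hpow.2]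
      omega
    · -- r = 2σ + 1
      subst hσeq
      have hσ1 : 1 ≤ σ := by omega
      have hσ2 : σ + 1 ≤ 2 ^ (k - 1) := by omega
      have H2 : ∀ e d, e < 2 → d < 2 → Bd (2^k + σ + 1) e d = shv (ck k) (Bd (σ + 1) e d) := by
        intro e d he hd
        rw [show 2^k + σ + 1 = 2^k + (σ + 1) from by ring]
        exact CL k hk3 (σ + 1) (by omega) hσ2 e d he hd
      have ht := transfer_odd (m := σ) (m' := 2^k + σ) (c := ck k) hσ1
        (fun e d he hd => CL k hk3 σ hσ1 (by omega) e d he hd) H2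
      rw [show 2 * (2^k + σ) + 1 = 2^(k+1) + (2 * σ + 1) from by ring] at ht
      rw [ht.1, ht.2, hpow.1, hpow.2]
      omega
end

section
/- If ℓ ≥ 2 and 2^{ℓ−1} ≤ r ≤ 2^ℓ, then M₀(2^ℓ + r) = 2^ℓ − m₀(2^{ℓ+1} − r) and m₀(2^ℓ + r) = 2^ℓ − M₀(2^{ℓ+1} − r). The first equality holds also for ℓ = 1. -/
lemma pd_even (n : ℕ) : pd (2 * n) = 0 := by
  unfold pd; rw [Nat.factorization_eq_zero_of_not_dvd (by omega)]

lemma pd_odd (n : ℕ) : pd (2 * n + 1) + pd n = 1 := by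
  unfold pd
  have h : 2 * n + 1 + 1 = 2 * (n + 1) := by ring
  rw [h, Nat.factorization_mul (by norm_num) (by omega)]
  simp [Nat.Prime.factorization Nat.prime_two]
  omega

lemma xw_even (n : ℕ) : xw (2 * n) + pd n = 1 := by
  unfold xw; have h1 := pd_even n; have h2 := pd_odd n; omega

lemma xw_odd (n : ℕ) : xw (2 * n + 1) + 2 * pd n = 2 := by
  unfold xw
  have h1 := pd_odd n; have h2 := pd_even (n+1)
  have h3 : 2 * n + 1 + 1 = 2 * (n + 1) := by ring
  rw [h3]; omega

lemma pd_le (n : ℕ) : pd n ≤ 1 := by unfold pd; omega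

lemma two_iff (m : ℕ) : xw m = 2 ↔ pd m = 1 := by
  rcases Nat.even_or_odd m with ⟨k, hk⟩ | ⟨k, hk⟩
  · subst hk
    have := xw_even k; have := pd_even k
    rw [show k + k = 2*k by ring] at *
    omega
  · subst hk
    have := xw_odd k; have := pd_odd k; have := pd_le k
    omega

-- counting
def c2 (i n : ℕ) : ℕ := (factorAt xw i n).count 2
def c0 (i n : ℕ) : ℕ := (factorAt xw i n).count 0

lemma factorAt_succ (w : ℕ → ℕ) (i n : ℕ) :
    factorAt w i (n+1) = factorAt w i n ++ [w (i+n)] := by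
  simp [factorAt, List.range_succ]

lemma c2_succ (i n : ℕ) : c2 i (n+1) = c2 i n + (if xw (i+n) = 2 then 1 else 0) := by
  simp only [c2, factorAt_succ, List.count_append, List.count_singleton']

lemma c0_succ (i n : ℕ) : c0 i (n+1) = c0 i n + (if xw (i+n) = 0 then 1 else 0) := by
  simp only [c0, factorAt_succ, List.count_append, List.count_singleton']

lemma c2_zero (i : ℕ) : c2 i 0 = 0 := rfl
lemma c0_zero (i : ℕ) : c0 i 0 = 0 := rfl

-- indicator facts
lemma I2_even (m : ℕ) : (if xw (2*m) = 2 then 1 else 0) = 0 := by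
  have := xw_even m; split_ifs <;> omega

lemma I2_odd (m : ℕ) : (if xw (2*m+1) = 2 then 1 else 0) + (if xw m = 2 then 1 else 0) = 1 := by
  have h1 := xw_odd m
  have h2 := (two_iff m)
  have h3 := pd_le m
  split_ifs <;> omega

lemma I0_even (m : ℕ) : (if xw (2*m) = 0 then 1 else 0) = (if xw m = 2 then 1 else 0) := by
  have h1 := xw_even m
  have h2 := (two_iff m)
  have h3 := pd_le m
  split_ifs <;> omega

lemma I0_odd (m : ℕ) : (if xw (2*m+1) = 0 then 1 else 0) = (if xw m = 2 then 1 else 0) := by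
  have h1 := xw_odd m
  have h2 := (two_iff m)
  have h3 := pd_le m
  split_ifs <;> omega

lemma c2_le (i n : ℕ) : c2 i n ≤ n := by
  induction n with
  | zero => simp [c2_zero]
  | succ n ih => rw [c2_succ]; split_ifs <;> omega

-- level relations for c2
lemma c2e (i n : ℕ) : c2 (2*i) (2*n) + c2 i n = n := by
  induction n with
  | zero => simp [c2_zero]
  | succ n ih =>
    have h1 : 2*(n+1) = (2*n)+1+1 := by ring
    rw [h1, c2_succ, c2_succ, c2_succ]
    have e1 : 2*i + (2*n+1) = 2*(i+n)+1 := by ring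
    have e2 : 2*i + 2*n = 2*(i+n) := by ring
    rw [e1, e2, I2_even]
    have := I2_odd (i+n)
    omega

lemma c2o (i n : ℕ) : c2 (2*i+1) (2*n) + c2 i n = n := by
  induction n with
  | zero => simp [c2_zero]
  | succ n ih =>
    have h1 : 2*(n+1) = (2*n)+1+1 := by ring
    rw [h1, c2_succ, c2_succ, c2_succ]
    have e1 : 2*i+1 + (2*n+1) = 2*(i+n+1) := by ring
    have e2 : 2*i+1 + 2*n = 2*(i+n)+1 := by ring
    rw [e1, e2, I2_even]
    have := I2_odd (i+n)
    omega

lemma c2e1 (i n : ℕ) : c2 (2*i) (2*n+1) + c2 i n = n := by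
  have h := c2e i n
  rw [c2_succ]
  have e2 : 2*i + 2*n = 2*(i+n) := by ring
  rw [e2, I2_even]
  omega

lemma c2o1 (i n : ℕ) : c2 (2*i+1) (2*n+1) + c2 i (n+1) = n+1 := by
  have h := c2o i n
  rw [c2_succ, c2_succ]
  have e1 : 2*i+1 + 2*n = 2*(i+n)+1 := by ring
  rw [e1]
  have := I2_odd (i+n)
  omega

-- level relations for c0
lemma c0e (i n : ℕ) : c0 (2*i) (2*n) = 2 * c2 i n := by
  induction n with
  | zero => simp [c0_zero, c2_zero]
  | succ n ih =>
    have h1 : 2*(n+1) = (2*n)+1+1 := by ring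
    rw [h1, c0_succ, c0_succ, c2_succ]
    have e1 : 2*i + (2*n+1) = 2*(i+n)+1 := by ring
    have e2 : 2*i + 2*n = 2*(i+n) := by ring
    rw [e1, e2, I0_even, I0_odd]
    omega

lemma c0o (i n : ℕ) : c0 (2*i+1) (2*n) = c2 i n + c2 (i+1) n := by
  induction n with
  | zero => simp [c0_zero, c2_zero]
  | succ n ih =>
    have h1 : 2*(n+1) = (2*n)+1+1 := by ring
    rw [h1, c0_succ, c0_succ, c2_succ i n, c2_succ (i+1) n]
    have e1 : 2*i+1 + (2*n+1) = 2*(i+n+1) := by ring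
    have e2 : 2*i+1 + 2*n = 2*(i+n)+1 := by ring
    rw [e1, e2, I0_even, I0_odd]
    have e3 : i+1+n = i+n+1 := by ring
    rw [e3]
    omega

lemma c0e1 (i n : ℕ) : c0 (2*i) (2*n+1) = c2 i (n+1) + c2 i n := by
  rw [c0_succ, c0e, c2_succ]
  have e2 : 2*i + 2*n = 2*(i+n) := by ring
  rw [e2, I0_even]
  omega

lemma c0o1 (i n : ℕ) : c0 (2*i+1) (2*n+1) = c2 (i+1) n + c2 i (n+1) := by
  rw [c0_succ, c0o, c2_succ]
  have e1 : 2*i+1 + 2*n = 2*(i+n)+1 := by ring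
  rw [e1, I0_odd]
  omega


lemma c0_le (i n : ℕ) : c0 i n ≤ n := by
  have : (factorAt xw i n).length = n := by simp [factorAt]
  have h : (factorAt xw i n).count 0 ≤ (factorAt xw i n).length := List.count_le_length
  rw [this] at h; exact h

lemma M2c_spec (n : ℕ) : (∃ i, c2 i n = M2c n) ∧ ∀ i, c2 i n ≤ M2c n := by
  have hne : {k | ∃ i, c2 i n = k}.Nonempty := ⟨c2 0 n, 0, rfl⟩
  have hbdd : BddAbove {k | ∃ i, c2 i n = k} := by
    refine ⟨n, fun k hk => ?_⟩
    obtain ⟨i, hi⟩ := hk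
    exact hi ▸ c2_le i n
  constructor
  · exact Nat.sSup_mem hne hbdd
  · intro i
    exact le_csSup hbdd ⟨i, rfl⟩

lemma m2c_spec (n : ℕ) : (∃ i, c2 i n = m2c n) ∧ ∀ i, m2c n ≤ c2 i n := by
  have hne : {k | ∃ i, c2 i n = k}.Nonempty := ⟨c2 0 n, 0, rfl⟩
  exact ⟨Nat.sInf_mem hne, fun i => Nat.sInf_le ⟨i, rfl⟩⟩

lemma M0_spec (n : ℕ) : (∃ i, c0 i n = M0 n) ∧ ∀ i, c0 i n ≤ M0 n := by
  have hne : {k | ∃ i, c0 i n = k}.Nonempty := ⟨c0 0 n, 0, rfl⟩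
  have hbdd : BddAbove {k | ∃ i, c0 i n = k} := by
    refine ⟨n, fun k hk => ?_⟩
    obtain ⟨i, hi⟩ := hk
    exact hi ▸ c0_le i n
  exact ⟨Nat.sSup_mem hne hbdd, fun i => le_csSup hbdd ⟨i, rfl⟩⟩

lemma m0_spec (n : ℕ) : (∃ i, c0 i n = m0 n) ∧ ∀ i, m0 n ≤ c0 i n := by
  have hne : {k | ∃ i, c0 i n = k}.Nonempty := ⟨c0 0 n, 0, rfl⟩
  exact ⟨Nat.sInf_mem hne, fun i => Nat.sInf_le ⟨i, rfl⟩⟩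

lemma c2_mono (i n : ℕ) : c2 i n ≤ c2 i (n+1) ∧ c2 i (n+1) ≤ c2 i n + 1 := by
  rw [c2_succ]; split_ifs <;> omega

-- recurrences for M2c/m2c
lemma Ge (n : ℕ) : M2c (2*n) + m2c n = n := by
  obtain ⟨⟨j, hj⟩, hub⟩ := M2c_spec (2*n)
  obtain ⟨⟨i0, hi0⟩, hlb⟩ := m2c_spec n
  have h1 : c2 (2*i0) (2*n) + c2 i0 n = n := c2e i0 n
  have h2 := hub (2*i0)
  rcases Nat.even_or_odd j with ⟨k, hk⟩ | ⟨k, hk⟩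
  · have h3 : c2 (2*k) (2*n) + c2 k n = n := c2e k n
    have h4 := hlb k
    rw [show j = 2*k by omega] at hj
    omega
  · have h3 : c2 (2*k+1) (2*n) + c2 k n = n := c2o k n
    have h4 := hlb k
    rw [show j = 2*k+1 by omega] at hj
    omega

lemma ge' (n : ℕ) : m2c (2*n) + M2c n = n := by
  obtain ⟨⟨j, hj⟩, hlb⟩ := m2c_spec (2*n)
  obtain ⟨⟨i0, hi0⟩, hub⟩ := M2c_spec n
  have h1 : c2 (2*i0) (2*n) + c2 i0 n = n := c2e i0 n
  have h2 := hlb (2*i0)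
  rcases Nat.even_or_odd j with ⟨k, hk⟩ | ⟨k, hk⟩
  · have h3 : c2 (2*k) (2*n) + c2 k n = n := c2e k n
    have h4 := hub k
    rw [show j = 2*k by omega] at hj
    omega
  · have h3 : c2 (2*k+1) (2*n) + c2 k n = n := c2o k n
    have h4 := hub k
    rw [show j = 2*k+1 by omega] at hj
    omega

lemma Go (n : ℕ) : M2c (2*n+1) + m2c (n+1) = n+1 := by
  obtain ⟨⟨j, hj⟩, hub⟩ := M2c_spec (2*n+1)
  obtain ⟨⟨i0, hi0⟩, hlb⟩ := m2c_spec (n+1)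
  have h1 : c2 (2*i0+1) (2*n+1) + c2 i0 (n+1) = n+1 := c2o1 i0 n
  have h2 := hub (2*i0+1)
  rcases Nat.even_or_odd j with ⟨k, hk⟩ | ⟨k, hk⟩
  · have h3 : c2 (2*k) (2*n+1) + c2 k n = n := c2e1 k n
    have h4 := hlb k
    obtain ⟨h5a, h5b⟩ := c2_mono k n
    rw [show j = 2*k by omega] at hj
    omega
  · have h3 : c2 (2*k+1) (2*n+1) + c2 k (n+1) = n+1 := c2o1 k n
    have h4 := hlb k
    rw [show j = 2*k+1 by omega] at hj
    omega

lemma go (n : ℕ) : m2c (2*n+1) + M2c n = n := by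
  obtain ⟨⟨j, hj⟩, hlb⟩ := m2c_spec (2*n+1)
  obtain ⟨⟨i0, hi0⟩, hub⟩ := M2c_spec n
  have h1 : c2 (2*i0) (2*n+1) + c2 i0 n = n := c2e1 i0 n
  have h2 := hlb (2*i0)
  rcases Nat.even_or_odd j with ⟨k, hk⟩ | ⟨k, hk⟩
  · have h3 : c2 (2*k) (2*n+1) + c2 k n = n := c2e1 k n
    have h4 := hub k
    rw [show j = 2*k by omega] at hj
    omega
  · have h3 : c2 (2*k+1) (2*n+1) + c2 k (n+1) = n+1 := c2o1 k n
    have h4 := hub k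
    have h5 := (c2_mono k n).2
    rw [show j = 2*k+1 by omega] at hj
    omega

lemma G_mono (n : ℕ) : M2c n ≤ M2c (n+1) ∧ M2c (n+1) ≤ M2c n + 1 := by
  obtain ⟨⟨i0, hi0⟩, hub0⟩ := M2c_spec n
  obtain ⟨⟨i1, hi1⟩, hub1⟩ := M2c_spec (n+1)
  have h1 := (c2_mono i0 n).1
  have h2 := (c2_mono i1 n).2
  have h3 := hub1 i0
  have h4 := hub0 i1
  omega

lemma g_mono (n : ℕ) : m2c n ≤ m2c (n+1) ∧ m2c (n+1) ≤ m2c n + 1 := by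
  obtain ⟨⟨i0, hi0⟩, hlb0⟩ := m2c_spec n
  obtain ⟨⟨i1, hi1⟩, hlb1⟩ := m2c_spec (n+1)
  have h1 := (c2_mono i0 n).2
  have h2 := (c2_mono i1 n).1
  have h3 := hlb1 i0
  have h4 := hlb0 i1
  omega

-- M0/m0 in terms of M2c/m2c
lemma M0e (n : ℕ) : M0 (2*n) = 2 * M2c n := by
  obtain ⟨⟨j, hj⟩, hub⟩ := M0_spec (2*n)
  obtain ⟨⟨i0, hi0⟩, hubG⟩ := M2c_spec n
  have h1 : c0 (2*i0) (2*n) = 2 * c2 i0 n := c0e i0 n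
  have h2 := hub (2*i0)
  rcases Nat.even_or_odd j with ⟨k, hk⟩ | ⟨k, hk⟩
  · have h3 := c0e k n
    have h4 := hubG k
    rw [show j = 2*k by omega] at hj
    omega
  · have h3 := c0o k n
    have h4 := hubG k; have h5 := hubG (k+1)
    rw [show j = 2*k+1 by omega] at hj
    omega

lemma m0e (n : ℕ) : m0 (2*n) = 2 * m2c n := by
  obtain ⟨⟨j, hj⟩, hlb⟩ := m0_spec (2*n)
  obtain ⟨⟨i0, hi0⟩, hlbg⟩ := m2c_spec n
  have h1 : c0 (2*i0) (2*n) = 2 * c2 i0 n := c0e i0 n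
  have h2 := hlb (2*i0)
  rcases Nat.even_or_odd j with ⟨k, hk⟩ | ⟨k, hk⟩
  · have h3 := c0e k n
    have h4 := hlbg k
    rw [show j = 2*k by omega] at hj
    omega
  · have h3 := c0o k n
    have h4 := hlbg k; have h5 := hlbg (k+1)
    rw [show j = 2*k+1 by omega] at hj
    omega

lemma M0o (n : ℕ) : M0 (2*n+1) = M2c n + M2c (n+1) := by
  obtain ⟨⟨j, hj⟩, hub⟩ := M0_spec (2*n+1)
  obtain ⟨⟨i0, hi0⟩, hubG0⟩ := M2c_spec n
  obtain ⟨⟨i1, hi1⟩, hubG1⟩ := M2c_spec (n+1)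
  have hGm := G_mono n
  -- find i with c2 i n + c2 i (n+1) = M2c n + M2c (n+1)
  have hach : ∃ i, c2 i n = M2c n ∧ c2 i (n+1) = M2c (n+1) := by
    by_cases hc : M2c (n+1) = M2c n + 1
    · refine ⟨i1, ?_, hi1⟩
      have := (c2_mono i1 n).2
      have := hubG0 i1
      omega
    · refine ⟨i0, hi0, ?_⟩
      have := (c2_mono i0 n).1
      have := hubG1 i0
      omega
  obtain ⟨i, hi, hi'⟩ := hach
  have h1 : c0 (2*i) (2*n+1) = c2 i (n+1) + c2 i n := c0e1 i n
  have h2 := hub (2*i)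
  rcases Nat.even_or_odd j with ⟨k, hk⟩ | ⟨k, hk⟩
  · have h3 := c0e1 k n
    have h4 := hubG0 k; have h5 := hubG1 k
    rw [show j = 2*k by omega] at hj
    omega
  · have h3 := c0o1 k n
    have h4 := hubG0 (k+1); have h5 := hubG1 k
    rw [show j = 2*k+1 by omega] at hj
    omega

lemma m0o (n : ℕ) : m0 (2*n+1) = m2c n + m2c (n+1) := by
  obtain ⟨⟨j, hj⟩, hlb⟩ := m0_spec (2*n+1)
  obtain ⟨⟨i0, hi0⟩, hlbg0⟩ := m2c_spec n
  obtain ⟨⟨i1, hi1⟩, hlbg1⟩ := m2c_spec (n+1)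
  have hgm := g_mono n
  have hach : ∃ i, c2 i n = m2c n ∧ c2 i (n+1) = m2c (n+1) := by
    by_cases hc : m2c (n+1) = m2c n + 1
    · refine ⟨i0, hi0, ?_⟩
      have := (c2_mono i0 n).2
      have := hlbg1 i0
      omega
    · refine ⟨i1, ?_, hi1⟩
      have := (c2_mono i1 n).1
      have := hlbg0 i1
      omega
  obtain ⟨i, hi, hi'⟩ := hach
  have h1 : c0 (2*i) (2*n+1) = c2 i (n+1) + c2 i n := c0e1 i n
  have h2 := hlb (2*i)
  rcases Nat.even_or_odd j with ⟨k, hk⟩ | ⟨k, hk⟩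
  · have h3 := c0e1 k n
    have h4 := hlbg0 k; have h5 := hlbg1 k
    rw [show j = 2*k by omega] at hj
    omega
  · have h3 := c0o1 k n
    have h4 := hlbg0 (k+1); have h5 := hlbg1 k
    rw [show j = 2*k+1 by omega] at hj
    omega

-- base values
lemma pd0 : pd 0 = 0 := by simp [pd]

lemma G1 : M2c 1 = 1 := by
  obtain ⟨⟨j, hj⟩, hub⟩ := M2c_spec 1
  have hx : xw 1 = 2 := by
    have h := xw_odd 0
    rw [pd0] at h
    norm_num at h
    exact h
  have h1 : c2 1 1 = 1 := by
    have h := c2_succ 1 0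
    norm_num [hx] at h
    simpa [c2, factorAt] using h
  have h2 := hub 1
  have h3 := c2_le j 1
  omega

lemma g1 : m2c 1 = 0 := by
  obtain ⟨⟨j, hj⟩, hlb⟩ := m2c_spec 1
  have hx : xw 0 ≠ 2 := by
    have h := xw_even 0
    rw [pd0] at h
    norm_num at h
    omega
  have h1 : c2 0 1 = 0 := by
    have h := c2_succ 0 0
    norm_num [hx] at h
    simpa [c2, factorAt] using h
  have h2 := hlb 0
  omega

-- KEY lemma
lemma key : ∀ l a b : ℕ, a + b = 3 * 2^l → 2^l ≤ a → a ≤ 2^(l+1) → M2c a + m2c b = 2^l := by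
  intro l
  induction l with
  | zero =>
    intro a b hab h1 h2
    simp at h1 h2 ⊢
    interval_cases a
    · -- a = 1, b = 2
      have hb : b = 2 := by omega
      subst hb
      have h := ge' 1
      rw [show 2*1 = 2 by norm_num] at h
      have hG1 := G1
      omega
    · -- a = 2, b = 1
      have hb : b = 1 := by omega
      subst hb
      have h := Ge 1
      rw [show 2*1 = 2 by norm_num] at h
      omega
  | succ l ih =>
    intro a b hab h1 h2
    have hp : (2:ℕ)^(l+1) = 2 * 2^l := by rw [pow_succ]; ring
    have hp2 : (2:ℕ)^(l+1+1) = 4 * 2^l := by rw [pow_succ, pow_succ]; ring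
    rcases Nat.even_or_odd a with ⟨a', ha⟩ | ⟨a', ha⟩
    · -- a even, hence b even
      have ha2 : a = 2 * a' := by omega
      obtain ⟨b', hb⟩ : ∃ b', b = 2 * b' := ⟨b/2, by omega⟩
      have hih : M2c b' + m2c a' = 2^l := ih b' a' (by omega) (by omega) (by omega)
      have r1 := Ge a'
      have r2 := ge' b'
      rw [ha2, hb]
      omega
    · -- a odd, b odd
      have ha2 : a = 2 * a' + 1 := by omega
      obtain ⟨b', hb⟩ : ∃ b', b = 2 * b' + 1 := ⟨b/2, by omega⟩
      have hih : M2c b' + m2c (a'+1) = 2^l := ih b' (a'+1) (by omega) (by omega) (by omega)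
      have r1 := Go a'
      have r2 := go b'
      rw [ha2, hb]
      omega

theorem stmt12 :
    (∀ l, 1 ≤ l → ∀ r, 2 ^ (l - 1) ≤ r → r ≤ 2 ^ l →
      M0 (2 ^ l + r) + m0 (2 ^ (l + 1) - r) = 2 ^ l) ∧
    (∀ l, 2 ≤ l → ∀ r, 2 ^ (l - 1) ≤ r → r ≤ 2 ^ l →
      m0 (2 ^ l + r) + M0 (2 ^ (l + 1) - r) = 2 ^ l) := by
  constructor
  · intro l hl r hr1 hr2
    obtain ⟨l', rfl⟩ : ∃ l', l = l' + 1 := ⟨l - 1, by omega⟩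
    have hq : (2:ℕ)^(l'+1) = 2 * 2^l' := by rw [pow_succ]; ring
    have hq2 : (2:ℕ)^(l'+1+1) = 4 * 2^l' := by rw [pow_succ, pow_succ]; ring
    set q := (2:ℕ)^l' with hqdef
    have hqpos : 1 ≤ q := Nat.one_le_two_pow
    simp only [Nat.add_sub_cancel] at hr1
    rcases Nat.even_or_odd r with ⟨s, hs⟩ | ⟨s, hs⟩
    · have hn : 2^(l'+1) + r = 2 * (q + s) := by omega
      have hm : 2^(l'+1+1) - r = 2 * (2*q - s) := by omega
      rw [hn, hm, M0e, m0e]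
      have hk := key l' (q+s) (2*q - s) (by omega) (by omega) (by omega)
      omega
    · have hn : 2^(l'+1) + r = 2 * (q + s) + 1 := by omega
      have hm : 2^(l'+1+1) - r = 2 * (2*q - s - 1) + 1 := by omega
      rw [hn, hm, M0o, m0o]
      have hk1 := key l' (q+s) (2*q - s - 1 + 1) (by omega) (by omega) (by omega)
      have hk2 := key l' (q+s+1) (2*q - s - 1) (by omega) (by omega) (by omega)
      omega
  · intro l hl r hr1 hr2
    obtain ⟨l', rfl⟩ : ∃ l', l = l' + 1 := ⟨l - 1, by omega⟩
    have hq : (2:ℕ)^(l'+1) = 2 * 2^l' := by rw [pow_succ]; ring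
    have hq2 : (2:ℕ)^(l'+1+1) = 4 * 2^l' := by rw [pow_succ, pow_succ]; ring
    set q := (2:ℕ)^l' with hqdef
    have hqpos : 1 ≤ q := Nat.one_le_two_pow
    simp only [Nat.add_sub_cancel] at hr1
    rcases Nat.even_or_odd r with ⟨s, hs⟩ | ⟨s, hs⟩
    · have hn : 2^(l'+1) + r = 2 * (q + s) := by omega
      have hm : 2^(l'+1+1) - r = 2 * (2*q - s) := by omega
      rw [hn, hm, m0e, M0e]
      have hk := key l' (2*q - s) (q + s) (by omega) (by omega) (by omega)
      omega
    · have hn : 2^(l'+1) + r = 2 * (q + s) + 1 := by omega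
      have hm : 2^(l'+1+1) - r = 2 * (2*q - s - 1) + 1 := by omega
      rw [hn, hm, m0o, M0o]
      have hk1 := key l' (2*q - s - 1 + 1) (q+s) (by omega) (by omega) (by omega)
      have hk2 := key l' (2*q - s - 1) (q+s+1) (by omega) (by omega) (by omega)
      omega
end
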